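/- arXiv:2310.15207 — 3 statements merged into one kernel-verified Lean document; each statement's English description precedes it below -/
import Mathlib

section
/- For any odd integer n > 1, ∑_{k=0}^{(n-1)/2} (q;q^2)_k^2 / (q^2;q^2)_k^2 ≡ (-1)^{(n-1)/2} q^{(1-n^2)/4} modulo Φ_n(q)^2, as a congruence of rational functions in q (the right side involving q^{(1-n^2)/4}, a negative power of q, interpreted in the Laurent polynomial ring). -/
open Finset Polynomial

/-- The q-shifted factorial `(a;Q)_k` in `ℚ(q)`. -/
noncomputable def poch (a Q : RatFunc ℚ) (k : ℕ) : RatFunc ℚ :=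
  ∏ i ∈ Finset.range k, (1 - a * Q ^ i)

noncomputable abbrev qq : RatFunc ℚ := RatFunc.X

/-- `P a k = ∏_{i<k} (1 - q^(a+2i))` -/
noncomputable def P (a : ℤ) (k : ℕ) : RatFunc ℚ :=
  ∏ i ∈ Finset.range k, (1 - qq ^ (a + 2*(i:ℤ)))

noncomputable def tt (m k : ℕ) : RatFunc ℚ :=
  P (2*(m:ℤ)+2) k * P (-(2*(m:ℤ))) k / (P 2 k)^2

noncomputable def GG (m k : ℕ) : RatFunc ℚ :=
  (1 + qq^(2*(m:ℤ)+2)) * (1 - qq^(2*(k:ℤ)))^2 / (qq^(2*(m:ℤ)+2) * (1 - qq^(2*(m:ℤ)+2)))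
    * (P (2*(m:ℤ)+2) k * P (-(2*(m:ℤ))) (k-1)) / (P 2 k)^2

lemma hq0 : qq ≠ 0 := RatFunc.X_ne_zero

lemma qpow_nat (j : ℕ) : qq ^ (j:ℤ) = (algebraMap ℚ[X] (RatFunc ℚ)) (X ^ j) := by
  rw [zpow_natCast, map_pow, RatFunc.algebraMap_X]

lemma qpow_ne_one {j : ℕ} (h : 0 < j) : qq ^ (j:ℤ) ≠ 1 := by
  rw [qpow_nat]
  intro heq
  have h1 : (algebraMap ℚ[X] (RatFunc ℚ)) (X ^ j) = (algebraMap ℚ[X] (RatFunc ℚ)) 1 := by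
    simpa using heq
  have := RatFunc.algebraMap_injective ℚ h1
  have hdeg := congrArg natDegree this
  simp [natDegree_X_pow] at hdeg
  omega

lemma one_sub_qpow_ne {j : ℕ} (h : 0 < j) : (1:RatFunc ℚ) - qq ^ (j:ℤ) ≠ 0 := by
  intro hc
  exact qpow_ne_one h (sub_eq_zero.mp hc).symm

lemma P_succ (a : ℤ) (k : ℕ) : P a (k+1) = P a k * (1 - qq ^ (a + 2*(k:ℤ))) := by
  rw [P, Finset.prod_range_succ]; rfl

lemma P_succ' (a : ℤ) (k : ℕ) : P a (k+1) = (1 - qq ^ a) * P (a+2) k := by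
  rw [P, Finset.prod_range_succ']
  rw [mul_comm]
  congr 1
  · simp
  · apply Finset.prod_congr rfl
    intro i _
    congr 2
    push_cast
    ring

lemma P2_ne (k : ℕ) : P 2 k ≠ 0 := by
  rw [P]
  apply Finset.prod_ne_zero_iff.mpr
  intro i _
  have : (2 + 2*(i:ℤ)) = ((2+2*i : ℕ) : ℤ) := by push_cast; ring
  rw [this]
  exact one_sub_qpow_ne (by omega)

lemma P_neg_eq_zero {m k : ℕ} (h : m < k) : P (-(2*(m:ℤ))) k = 0 := by
  rw [P]
  apply Finset.prod_eq_zero (Finset.mem_range.mpr h)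
  simp

example : True := trivial

lemma tt_succ_m (m k : ℕ) :
    tt (m+1) k = P (2*(m:ℤ)+4) k * P (-(2*(m:ℤ))-2) k / (P 2 k)^2 := by
  have h1 : (2*((m+1:ℕ):ℤ)+2) = 2*(m:ℤ)+4 := by push_cast; ring
  have h2 : (-(2*((m+1:ℕ):ℤ))) = -(2*(m:ℤ))-2 := by push_cast; ring
  rw [tt, h1, h2]

set_option maxHeartbeats 2000000 in
lemma wz_succ (m k : ℕ) :
    tt (m+1) (k+1) + qq^(-(2*(m:ℤ))-2) * tt m (k+1) = GG m (k+2) - GG m (k+1) := by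
  rw [tt_succ_m, tt, GG, GG]
  simp only [show k+2 = (k+1)+1 from rfl, Nat.add_sub_cancel]
  rw [P_succ (2*(m:ℤ)+4) k, P_succ' (-(2*(m:ℤ))-2) k,
     show (-(2*(m:ℤ))-2)+2 = -(2*(m:ℤ)) from by ring,
     P_succ (2*(m:ℤ)+2) (k+1), P_succ' (2*(m:ℤ)+2) k,
     show (2*(m:ℤ)+2)+2 = 2*(m:ℤ)+4 from by ring,
     P_succ (-(2*(m:ℤ))) k, P_succ 2 (k+1), P_succ 2 k]
  push_cast
  set A := qq^(2*(m:ℤ)+2) with hA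
  set u := qq^((2:ℤ)+2*(k:ℤ)) with hu
  have hAne : A ≠ 0 := zpow_ne_zero _ hq0
  have hA1 : (1:RatFunc ℚ) - A ≠ 0 := by
    rw [hA, show (2*(m:ℤ)+2) = ((2*m+2:ℕ):ℤ) from by push_cast; ring]
    exact one_sub_qpow_ne (by omega)
  have hu1 : (1:RatFunc ℚ) - u ≠ 0 := by
    rw [hu, show ((2:ℤ)+2*(k:ℤ)) = ((2+2*k:ℕ):ℤ) from by push_cast; ring]
    exact one_sub_qpow_ne (by omega)
  have hus1 : (1:RatFunc ℚ) - u * qq^(2:ℤ) ≠ 0 := by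
    rw [hu, ← zpow_add₀ hq0, show ((2:ℤ)+2*(k:ℤ)+2) = ((4+2*k:ℕ):ℤ) from by push_cast; ring]
    exact one_sub_qpow_ne (by omega)
  have hB3 : P 2 k ≠ 0 := P2_ne k
  have e1 : qq^(2*(m:ℤ)+4+2*(k:ℤ)) = A*u := by
    rw [hA, hu, ← zpow_add₀ hq0]; congr 1 <;> ring
  have e2 : qq^(-(2*(m:ℤ))-2) = A⁻¹ := by
    rw [hA, ← zpow_neg]; congr 1 <;> ring
  have e3 : qq^(-(2*(m:ℤ))+2*(k:ℤ)) = u*A⁻¹ := by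
    rw [hA, hu, ← zpow_neg, ← zpow_add₀ hq0]; congr 1 <;> ring
  have e5 : qq^(2*((k:ℤ)+1+1)) = u*qq^(2:ℤ) := by
    rw [hu, ← zpow_add₀ hq0]; congr 1 <;> ring
  have e7 : qq^(2*(m:ℤ)+2+2*((k:ℤ)+1)) = A*u := by
    rw [hA, hu, ← zpow_add₀ hq0]; congr 1 <;> ring
  have e8 : qq^(2*((k:ℤ)+1)) = u := by
    rw [hu]; congr 1 <;> ring
  have e9 : qq^((2:ℤ)+2*((k:ℤ)+1)) = u*qq^(2:ℤ) := by
    rw [hu, ← zpow_add₀ hq0]; congr 1 <;> ring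
  rw [e1, e2, e3, e5, e7, e8, e9]
  rw [← sub_eq_zero]
  have h2 : (P 2 k*(1-u))^2 ≠ 0 := pow_ne_zero _ (mul_ne_zero hB3 hu1)
  have h3 : (P 2 k*(1-u)*(1-u*qq^(2:ℤ)))^2 ≠ 0 :=
    pow_ne_zero _ (mul_ne_zero (mul_ne_zero hB3 hu1) hus1)
  have hAA : A*(1-A) ≠ 0 := mul_ne_zero hAne hA1
  generalize qq^(2:ℤ) = v at *
  field_simp
  ring

lemma tt_zero (m : ℕ) : tt m 0 = 1 := by simp [tt, P]

lemma GG_zero (m : ℕ) : GG m 0 = 0 := by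
  simp [GG, P]

lemma wz0 (m : ℕ) :
    tt (m+1) 0 + qq^(-(2*(m:ℤ))-2) * tt m 0 = GG m 1 - GG m 0 := by
  rw [tt_zero, tt_zero, GG_zero, GG]
  set A := qq^(2*(m:ℤ)+2) with hA
  have hAne : A ≠ 0 := zpow_ne_zero _ hq0
  have hA1 : (1:RatFunc ℚ) - A ≠ 0 := by
    rw [hA, show (2*(m:ℤ)+2) = ((2*m+2:ℕ):ℤ) from by push_cast; ring]
    exact one_sub_qpow_ne (by omega)
  have e8 : qq^(2*((1:ℕ):ℤ)) = qq^(2:ℤ) := by norm_num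
  have hs : (1:RatFunc ℚ) - qq^(2:ℤ) ≠ 0 := by
    rw [show (2:ℤ) = ((2:ℕ):ℤ) from by norm_num]
    exact one_sub_qpow_ne (by omega)
  rw [e8]
  have hP1 : P (2*(m:ℤ)+2) 1 = 1 - A := by
    rw [hA, P]; simp
  have hP0 : P (-(2*(m:ℤ))) 0 = 1 := by rw [P]; simp
  have hP21 : P 2 1 = 1 - qq^(2:ℤ) := by rw [P]; simp
  have e2 : qq^(-(2*(m:ℤ))-2) = A⁻¹ := by
    rw [hA, ← zpow_neg]; congr 1 <;> ring
  rw [hP1, hP0, hP21, e2]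
  rw [← sub_eq_zero]
  generalize qq^(2:ℤ) = v at *
  field_simp
  ring

lemma wz (m k : ℕ) :
    tt (m+1) k + qq^(-(2*(m:ℤ))-2) * tt m k = GG m (k+1) - GG m k := by
  cases k with
  | zero => exact wz0 m
  | succ k => exact wz_succ m k

lemma tt_eq_zero {m k : ℕ} (h : m < k) : tt m k = 0 := by
  rw [tt, P_neg_eq_zero h, mul_zero, zero_div]

lemma GG_eq_zero {m k : ℕ} (h : m+1 < k) : GG m k = 0 := by
  rw [GG, P_neg_eq_zero (show m < k-1 by omega), mul_zero, mul_zero, zero_div]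

lemma sumT (m : ℕ) :
    ∑ k ∈ Finset.range (m+2), tt m k = (-1:RatFunc ℚ)^m * qq^(-((m:ℤ)*((m:ℤ)+1))) := by
  induction m with
  | zero =>
      rw [Finset.sum_range_succ, Finset.sum_range_one, tt_zero,
        tt_eq_zero (by omega)]
      norm_num
  | succ m ih =>
      have tele : ∑ k ∈ Finset.range (m+3), (GG m (k+1) - GG m k)
          = GG m (m+3) - GG m 0 := Finset.sum_range_sub (GG m) (m+3)
      have h1 : ∑ k ∈ Finset.range (m+3), (tt (m+1) k + qq^(-(2*(m:ℤ))-2) * tt m k)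
          = GG m (m+3) - GG m 0 := by
        rw [← tele]; exact Finset.sum_congr rfl (fun k _ => wz m k)
      rw [GG_eq_zero (by omega), GG_zero, sub_zero, Finset.sum_add_distrib,
        ← Finset.mul_sum] at h1
      have h2 : ∑ k ∈ Finset.range (m+3), tt m k = ∑ k ∈ Finset.range (m+2), tt m k := by
        rw [show m+3 = (m+2)+1 from rfl, Finset.sum_range_succ, tt_eq_zero (by omega), add_zero]
      rw [h2, ih] at h1
      have h3 : ∑ k ∈ Finset.range (m+1+2), tt (m+1) k
          = - (qq^(-(2*(m:ℤ))-2) * ((-1:RatFunc ℚ)^m * qq^(-((m:ℤ)*((m:ℤ)+1))))) := by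
        rw [show m+1+2 = m+3 from rfl]; exact eq_neg_of_add_eq_zero_left h1
      rw [h3, pow_succ]
      rw [show ((-1:RatFunc ℚ)^m * -1) * qq^(-((↑(m+1):ℤ)*((↑(m+1):ℤ)+1)))
          = -((-1:RatFunc ℚ)^m * qq^(-((↑(m+1):ℤ)*((↑(m+1):ℤ)+1)))) from by ring]
      rw [neg_inj, mul_comm (qq^(-(2*(m:ℤ))-2)), mul_assoc, ← zpow_add₀ hq0]
      congr 2
      push_cast
      ring

lemma sumT' (m : ℕ) :
    ∑ k ∈ Finset.range (m+1), tt m k = (-1:RatFunc ℚ)^m * qq^(-((m:ℤ)*((m:ℤ)+1))) := by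
  rw [← sumT m, show m+2 = (m+1)+1 from rfl, Finset.sum_range_succ (tt m) (m+1),
    tt_eq_zero (by omega), add_zero]

noncomputable def p1 (k : ℕ) : ℚ[X] := ∏ i ∈ Finset.range k, (1 - X^(1+2*i))
noncomputable def p2 (k : ℕ) : ℚ[X] := ∏ i ∈ Finset.range k, (1 - X^(2+2*i))
noncomputable def pv (n k : ℕ) : ℚ[X] :=
  ∏ i ∈ Finset.range k, ((1 - X^(n+1+2*i)) * (X^n - X^(1+2*i)))
noncomputable def W (n k : ℕ) : ℚ[X] := X^(n*k) * (p1 k)^2 - pv n k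

lemma W_dvd (n k : ℕ) : ((X:ℚ[X])^n - 1)^2 ∣ W n k := by
  induction k with
  | zero => simp [W, p1, pv]
  | succ k ih =>
      obtain ⟨c, hc⟩ := ih
      rw [W] at hc
      refine ⟨(X:ℚ[X])^n * (1 - X^(1+2*k))^2 * c + X^(1+2*k) * pv n k, ?_⟩
      rw [W, p1, pv, Finset.prod_range_succ, Finset.prod_range_succ, ← p1, ← pv]
      rw [show n*(k+1) = n*k + n from by ring, pow_add,
        show n+1+2*k = n+(1+2*k) from by ring, pow_add]
      linear_combination ((X:ℚ[X])^n*(1 - X^(1+2*k))^2) * hc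

lemma map_p1 (k : ℕ) : algebraMap ℚ[X] (RatFunc ℚ) (p1 k) = P 1 k := by
  rw [p1, map_prod, P]
  refine Finset.prod_congr rfl fun i _ => ?_
  rw [map_sub, map_one, show ((1:ℤ)+2*(i:ℤ)) = ((1+2*i:ℕ):ℤ) from by push_cast; ring,
    qpow_nat]

lemma map_p2 (k : ℕ) : algebraMap ℚ[X] (RatFunc ℚ) (p2 k) = P 2 k := by
  rw [p2, map_prod, P]
  refine Finset.prod_congr rfl fun i _ => ?_
  rw [map_sub, map_one, show ((2:ℤ)+2*(i:ℤ)) = ((2+2*i:ℕ):ℤ) from by push_cast; ring,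
    qpow_nat]

lemma map_pv (m k : ℕ) :
    algebraMap ℚ[X] (RatFunc ℚ) (pv (2*m+1) k)
      = P (2*(m:ℤ)+2) k * ((qq^(((2*m+1):ℕ):ℤ))^k * P (-(2*(m:ℤ))) k) := by
  rw [pv, map_prod]
  have : ∀ i ∈ Finset.range k,
      algebraMap ℚ[X] (RatFunc ℚ) ((1 - X^(2*m+1+1+2*i)) * (X^(2*m+1) - X^(1+2*i)))
        = (1 - qq^(2*(m:ℤ)+2+2*(i:ℤ))) * (qq^(((2*m+1):ℕ):ℤ) * (1 - qq^(-(2*(m:ℤ))+2*(i:ℤ)))) := by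
    intro i _
    rw [map_mul, map_sub, map_one, map_sub,
      show (2*(m:ℤ)+2+2*(i:ℤ)) = ((2*m+1+1+2*i:ℕ):ℤ) from by push_cast; ring, qpow_nat]
    congr 1
    rw [mul_sub, mul_one, ← zpow_add₀ hq0,
      show (((2*m+1:ℕ)):ℤ) + (-(2*(m:ℤ))+2*(i:ℤ)) = ((1+2*i:ℕ):ℤ) from by push_cast; ring,
      qpow_nat, qpow_nat]
  rw [Finset.prod_congr rfl this, Finset.prod_mul_distrib, Finset.prod_mul_distrib,
    Finset.prod_const, Finset.card_range]
  rw [P, P]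

lemma EL (m k : ℕ) :
    ((P 1 k)^2/(P 2 k)^2 - tt m k)
        * algebraMap ℚ[X] (RatFunc ℚ) (X^((2*m+1)*k) * (p2 k)^2)
      = algebraMap ℚ[X] (RatFunc ℚ) (W (2*m+1) k) := by
  have hxk : algebraMap ℚ[X] (RatFunc ℚ) (X^((2*m+1)*k)) = (qq^(((2*m+1):ℕ):ℤ))^k := by
    rw [pow_mul, map_pow, ← qpow_nat]
  rw [W, map_sub, map_mul, map_mul, map_pv, tt, hxk, map_pow, map_pow, map_p1, map_p2]
  have h2 : P 2 k ≠ 0 := P2_ne k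
  field_simp

/-- localization-style predicate: `f` is `Φ²·(local integer)` -/
def Good (Φ : ℚ[X]) (f : RatFunc ℚ) : Prop :=
  ∃ a b : ℚ[X], ¬ Φ ∣ b ∧ f * algebraMap ℚ[X] (RatFunc ℚ) b = algebraMap ℚ[X] (RatFunc ℚ) (Φ^2 * a)

lemma good_zero {Φ : ℚ[X]} (hΦ : ¬ IsUnit Φ) : Good Φ 0 :=
  ⟨0, 1, fun h => hΦ (isUnit_of_dvd_one h), by simp⟩

lemma good_add {Φ : ℚ[X]} (hP : Prime Φ) {f g : RatFunc ℚ}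
    (hf : Good Φ f) (hg : Good Φ g) : Good Φ (f+g) := by
  obtain ⟨a1, b1, hb1, e1⟩ := hf
  obtain ⟨a2, b2, hb2, e2⟩ := hg
  refine ⟨a1*b2 + a2*b1, b1*b2, fun h => ((hP.dvd_mul.mp h).elim hb1 hb2), ?_⟩
  have : (f+g) * algebraMap ℚ[X] (RatFunc ℚ) (b1*b2)
      = (f * algebraMap ℚ[X] (RatFunc ℚ) b1) * algebraMap ℚ[X] (RatFunc ℚ) b2
        + (g * algebraMap ℚ[X] (RatFunc ℚ) b2) * algebraMap ℚ[X] (RatFunc ℚ) b1 := by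
    rw [map_mul]; ring
  rw [this, e1, e2, ← map_mul, ← map_mul, ← map_add]
  congr 1
  ring

lemma good_num {Φ : ℚ[X]} (hΦ : Irreducible Φ) {f : RatFunc ℚ}
    (hf : Good Φ f) : Φ^2 ∣ f.num := by
  obtain ⟨a, b, hb, e⟩ := hf
  have hb0 : b ≠ 0 := fun h0 => hb (h0 ▸ dvd_zero Φ)
  have e2 : algebraMap ℚ[X] (RatFunc ℚ) (f.num * b)
      = algebraMap ℚ[X] (RatFunc ℚ) (Φ^2 * a * f.denom) := by
    rw [map_mul, map_mul]
    have hd : algebraMap ℚ[X] (RatFunc ℚ) f.denom ≠ 0 :=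
      RatFunc.algebraMap_ne_zero (RatFunc.denom_ne_zero f)
    have hnum : algebraMap ℚ[X] (RatFunc ℚ) f.num
        = f * algebraMap ℚ[X] (RatFunc ℚ) f.denom := by
      exact (div_eq_iff hd).mp (RatFunc.num_div_denom f)
    rw [hnum]
    calc f * algebraMap ℚ[X] (RatFunc ℚ) f.denom * algebraMap ℚ[X] (RatFunc ℚ) b
        = (f * algebraMap ℚ[X] (RatFunc ℚ) b) * algebraMap ℚ[X] (RatFunc ℚ) f.denom := by ring
      _ = algebraMap ℚ[X] (RatFunc ℚ) (Φ^2 * a)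
            * algebraMap ℚ[X] (RatFunc ℚ) f.denom := by rw [e]
  have e3 : f.num * b = Φ^2 * a * f.denom := RatFunc.algebraMap_injective ℚ e2
  have hcop : IsCoprime (Φ^2) b := (hΦ.coprime_iff_not_dvd.mpr hb).pow_left
  exact hcop.dvd_of_dvd_mul_right ⟨a * f.denom, by rw [e3]; ring⟩

lemma poch1 (k : ℕ) : poch RatFunc.X (RatFunc.X^2) k = P 1 k := by
  rw [poch, P]
  refine Finset.prod_congr rfl fun i _ => ?_
  congr 1
  rw [show ((1:ℤ)+2*(i:ℤ)) = ((1+2*i:ℕ):ℤ) from by push_cast; ring, zpow_natCast]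
  ring

lemma poch2 (k : ℕ) : poch (RatFunc.X^2) (RatFunc.X^2) k = P 2 k := by
  rw [poch, P]
  refine Finset.prod_congr rfl fun i _ => ?_
  congr 1
  rw [show ((2:ℤ)+2*(i:ℤ)) = ((2+2*i:ℕ):ℤ) from by push_cast; ring, zpow_natCast]
  ring

lemma cyc_not_dvd {n : ℕ} (hn : 0 < n) {ζ : ℂ} (hprim : IsPrimitiveRoot ζ n)
    {b : ℚ[X]} (hb : aeval ζ b ≠ 0) : ¬ Polynomial.cyclotomic n ℚ ∣ b := by
  intro hdvd
  obtain ⟨c, hc⟩ := hdvd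
  apply hb
  have hroot : aeval ζ (Polynomial.cyclotomic n ℚ) = 0 := by
    rw [aeval_def, ← eval_map, map_cyclotomic]
    exact hprim.isRoot_cyclotomic hn
  rw [hc, map_mul, hroot, zero_mul]

set_option maxHeartbeats 1600000 in
/-- for odd `n > 1`,
`∑_{k=0}^{(n-1)/2} (q;q²)²_k/(q²;q²)²_k ≡ (-1)^{(n-1)/2} q^{(1-n²)/4} (mod Φ_n(q)²)`. -/
theorem stmt15 (n : ℕ) (hn : 1 < n) (hodd : Odd n) :
    (Polynomial.cyclotomic n ℚ) ^ 2 ∣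
      ((∑ k ∈ Finset.range ((n - 1) / 2 + 1),
          (poch RatFunc.X (RatFunc.X ^ 2) k) ^ 2
            / (poch (RatFunc.X ^ 2) (RatFunc.X ^ 2) k) ^ 2)
        - (-1) ^ ((n - 1) / 2) * RatFunc.X ^ (-(((n ^ 2 - 1) / 4 : ℕ) : ℤ))).num := by
  obtain ⟨m, rfl⟩ := hodd
  have hm : 1 ≤ m := by omega
  have h1 : (2*m+1-1)/2 = m := by omega
  have h2 : ((2*m+1)^2-1)/4 = m*(m+1) := by
    have h : (2*m+1)^2 = 4*(m*(m+1))+1 := by ring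
    generalize hMM : m*(m+1) = MM at h ⊢
    omega
  rw [h1, h2]
  set Φ := Polynomial.cyclotomic (2*m+1) ℚ with hΦ
  have hirr : Irreducible Φ := Polynomial.cyclotomic.irreducible_rat (by omega)
  have hprime : Prime Φ := UniqueFactorizationMonoid.irreducible_iff_prime.mp hirr
  have hsum : (∑ k ∈ Finset.range (m+1),
        (poch RatFunc.X (RatFunc.X^2) k)^2/(poch (RatFunc.X^2) (RatFunc.X^2) k)^2)
      - (-1)^m * RatFunc.X ^ (-((m*(m+1):ℕ):ℤ))
      = ∑ k ∈ Finset.range (m+1), ((P 1 k)^2/(P 2 k)^2 - tt m k) := by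
    rw [Finset.sum_sub_distrib]
    congr 1
    · exact Finset.sum_congr rfl fun k _ => by rw [poch1 k, poch2 k]
    · rw [show (-((m*(m+1):ℕ):ℤ)) = (-((m:ℤ)*((m:ℤ)+1))) from by push_cast; ring, sumT' m]
  rw [hsum]
  obtain ⟨ζ, hprim⟩ : ∃ ζ : ℂ, IsPrimitiveRoot ζ (2*m+1) :=
    ⟨_, Complex.isPrimitiveRoot_exp (2*m+1) (by omega)⟩
  have hζ0 : ζ ≠ 0 := hprim.ne_zero (by omega)
  have hterm : ∀ k, k ≤ m → Good Φ ((P 1 k)^2/(P 2 k)^2 - tt m k) := by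
    intro k hk
    obtain ⟨w, hw⟩ : Φ^2 ∣ W (2*m+1) k :=
      dvd_trans (pow_dvd_pow_of_dvd (Polynomial.cyclotomic.dvd_X_pow_sub_one (2*m+1) ℚ) 2)
        (W_dvd (2*m+1) k)
    refine ⟨w, X^((2*m+1)*k) * (p2 k)^2, ?_, ?_⟩
    · apply cyc_not_dvd (by omega) hprim
      have hae : aeval ζ (X^((2*m+1)*k) * (p2 k)^2)
          = ζ^((2*m+1)*k) * (∏ i ∈ Finset.range k, (1 - ζ^(2+2*i)))^2 := by
        simp [p2]
      rw [hae]
      apply mul_ne_zero (pow_ne_zero _ hζ0)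
      apply pow_ne_zero
      apply Finset.prod_ne_zero_iff.mpr
      intro i hi
      have hi' : i < k := Finset.mem_range.mp hi
      apply sub_ne_zero_of_ne
      exact (hprim.pow_ne_one_of_pos_of_lt (by omega) (by omega)).symm
    · rw [EL m k, hw]
  have hgoodN : ∀ N, N ≤ m+1 → Good Φ (∑ k ∈ Finset.range N, ((P 1 k)^2/(P 2 k)^2 - tt m k)) := by
    intro N
    induction N with
    | zero => intro _; simpa using good_zero hirr.not_isUnit
    | succ N ih =>
        intro hN
        rw [Finset.sum_range_succ]
        exact good_add hprime (ih (by omega)) (hterm N (by omega))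
  exact good_num hirr (hgoodN (m+1) le_rfl)
end

section
/- Let m and n be positive integers with n odd. Then ∑_{k=0}^{mn-1} q^k/(-q;q)_k · C(2k,k)_q ≡ (-1)^{(n-1)/2} q^{(n^2-1)/4} · ∑_{k=0}^{m-1} (1/2^k) C(2k,k) modulo Φ_n(q), where C(2k,k)_q is the Gaussian binomial coefficient and C(2k,k) is the ordinary central binomial coefficient (the rational constant on the right having denominator a power of 2, coprime to Φ_n(q) after reduction for odd n). -/
open Finset Polynomial

/-- The Gaussian binomial coefficient `C(M,N)_q` in `ℚ(q)`. -/
noncomputable def qbinom (M N : ℕ) : RatFunc ℚ :=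
  if N ≤ M then
    poch RatFunc.X RatFunc.X M / (poch RatFunc.X RatFunc.X N * poch RatFunc.X RatFunc.X (M - N))
  else 0


section A
variable {K : Type*} [CommRing K] (q : K)

/-- Gaussian binomial with base `q`, defined by the q-Pascal recursion. -/
def gb : ℕ → ℕ → K
  | _, 0 => 1
  | 0, _ + 1 => 0
  | M + 1, r + 1 => q ^ (r + 1) * gb M (r + 1) + gb M r

lemma gb_zero_right (M : ℕ) : gb q M 0 = 1 := by cases M <;> rfl

lemma gb_eq_zero : ∀ {M r : ℕ}, M < r → gb q M r = 0
  | 0, _ + 1, _ => rfl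
  | M + 1, r + 1, h => by
      have h1 : M < r + 1 := by omega
      have h2 : M < r := by omega
      show q ^ (r + 1) * gb q M (r + 1) + gb q M r = 0
      rw [gb_eq_zero h1, gb_eq_zero h2]; ring

lemma gb_diag : ∀ M : ℕ, gb q M M = 1
  | 0 => rfl
  | M + 1 => by
      show q ^ (M + 1) * gb q M (M + 1) + gb q M M = 1
      rw [gb_eq_zero q (Nat.lt_succ_self M), gb_diag M]; ring

/-- Product formula: `gb M r * ∏_{j<M-r}(1-q^{j+1}) = ∏_{j<M-r}(1-q^{r+1+j})`. -/
lemma gbP2 : ∀ (M r : ℕ), r ≤ M →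
    gb q M r * ∏ j ∈ range (M - r), (1 - q ^ (j + 1))
      = ∏ j ∈ range (M - r), (1 - q ^ (r + 1 + j))
  | M, 0, _ => by
      rw [gb_zero_right, one_mul, Nat.sub_zero]
      exact prod_congr rfl fun j _ => by rw [show 0 + 1 + j = j + 1 by omega]
  | 0, r + 1, h => by omega
  | M + 1, r + 1, h => by
      have hrM : r ≤ M := by omega
      rcases Nat.eq_or_lt_of_le hrM with hEq | hLt
      · subst hEq
        rw [Nat.sub_self, range_zero, prod_empty, prod_empty, mul_one, gb_diag]
      · obtain ⟨s, rfl⟩ : ∃ s, M = r + 1 + s := ⟨M - r - 1, by omega⟩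
        have e1 : r + 1 + s + 1 - (r + 1) = s + 1 := by omega
        have e2 : r + 1 + s - (r + 1) = s := by omega
        have e3 : r + 1 + s - r = s + 1 := by omega
        show (q ^ (r + 1) * gb q (r + 1 + s) (r + 1) + gb q (r + 1 + s) r) *
            ∏ j ∈ range (r + 1 + s + 1 - (r + 1)), (1 - q ^ (j + 1))
          = ∏ j ∈ range (r + 1 + s + 1 - (r + 1)), (1 - q ^ (r + 1 + 1 + j))
        rw [e1]
        have IH1 := gbP2 (r + 1 + s) (r + 1) (by omega)
        have IH2 := gbP2 (r + 1 + s) r (by omega)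
        rw [e2] at IH1
        rw [e3] at IH2
        rw [prod_range_succ (fun j => 1 - q ^ (j + 1)) s]
        rw [prod_range_succ (fun j => 1 - q ^ (r + 1 + 1 + j)) s]
        have hsplit : ∏ j ∈ range (s + 1), (1 - q ^ (r + 1 + j))
            = (1 - q ^ (r + 1)) * ∏ j ∈ range s, (1 - q ^ (r + 1 + 1 + j)) := by
          rw [prod_range_succ' (fun j => 1 - q ^ (r + 1 + j)) s]
          have h1 : ∏ j ∈ range s, (1 - q ^ (r + 1 + (j + 1)))
              = ∏ j ∈ range s, (1 - q ^ (r + 1 + 1 + j)) :=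
            prod_congr rfl fun j _ => by rw [show r + 1 + (j + 1) = r + 1 + 1 + j from by omega]
          rw [h1, show r + 1 + 0 = r + 1 from rfl]
          ring
        rw [hsplit] at IH2
        rw [prod_range_succ (fun j => 1 - q ^ (j + 1)) s] at IH2
        have es : r + 1 + 1 + s = (r + 1) + (s + 1) := by omega
        rw [es, pow_add]
        set P := ∏ j ∈ range s, (1 - q ^ (j + 1))
        set W := ∏ j ∈ range s, (1 - q ^ (r + 1 + 1 + j))
        linear_combination (q ^ (r + 1) * (1 - q ^ (s + 1))) * IH1 + IH2

/-- The terminating ₁φ₁ summation in polynomial form. -/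
lemma keyident : ∀ (M : ℕ) (c : K),
    ∑ r ∈ range (M + 1),
      gb q M r * q ^ (r * (r - 1)) * c ^ r * ∏ i ∈ range (M - r), (1 - c * q ^ (r + i)) = 1
  | 0, c => by simp [gb_zero_right]
  | M + 1, c => by
      have hIH := keyident M (c * q)
      set U : ℕ → K := fun r =>
        gb q M r * q ^ (r * r) * c ^ r * ∏ i ∈ range (M - r), (1 - c * q ^ (r + 1 + i)) with hU
      set T : ℕ → K := fun r =>
        gb q (M + 1) r * q ^ (r * (r - 1)) * c ^ r *
          ∏ i ∈ range (M + 1 - r), (1 - c * q ^ (r + i)) with hTdef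
      set G : ℕ → K := fun r => U r - U r * (c * q ^ r) with hG
      have hIH' : ∑ r ∈ range (M + 1), U r = 1 := by
        rw [← hIH]
        refine sum_congr rfl fun r _ => ?_
        have e1 : r * (r - 1) + r = r * r := by
          cases r with
          | zero => rfl
          | succ s => simp only [Nat.succ_sub_one]; ring
        have e2 : ∀ i : ℕ, c * q * q ^ (r + i) = c * q ^ (r + 1 + i) := by
          intro i
          rw [show r + 1 + i = (r + i) + 1 by omega, pow_succ]
          ring
        simp only [hU]
        rw [show ∏ i ∈ range (M - r), (1 - c * q * q ^ (r + i))
            = ∏ i ∈ range (M - r), (1 - c * q ^ (r + 1 + i)) from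
          prod_congr rfl fun i _ => by rw [e2 i]]
        rw [mul_pow, ← e1, pow_add]
        ring
      have hT : ∀ r ∈ range (M + 1), T (r + 1) = G (r + 1) + U r * (c * q ^ r) := by
        intro r hr
        have hrlt : r < M + 1 := mem_range.mp hr
        have er1 : (r + 1) * (r + 1 - 1) = r * r + r := by
          simp only [Nat.succ_sub_one]; ring
        simp only [hTdef, hG, hU]
        show (q ^ (r + 1) * gb q M (r + 1) + gb q M r) * q ^ ((r + 1) * (r + 1 - 1)) * c ^ (r + 1) *
            ∏ i ∈ range (M + 1 - (r + 1)), (1 - c * q ^ (r + 1 + i)) = _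
        rw [show M + 1 - (r + 1) = M - r from by omega, er1]
        rcases Nat.lt_or_ge r M with hlt | hge
        · have hx : ∏ i ∈ range (M - r), (1 - c * q ^ (r + 1 + i))
              = (1 - c * q ^ (r + 1)) * ∏ i ∈ range (M - (r + 1)), (1 - c * q ^ (r + 1 + 1 + i)) := by
            rw [show M - r = (M - (r + 1)) + 1 from by omega,
              prod_range_succ' (fun i => 1 - c * q ^ (r + 1 + i)) (M - (r + 1))]
            have h1 : ∏ i ∈ range (M - (r + 1)), (1 - c * q ^ (r + 1 + (i + 1)))
                = ∏ i ∈ range (M - (r + 1)), (1 - c * q ^ (r + 1 + 1 + i)) :=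
              prod_congr rfl fun i _ => by rw [show r + 1 + (i + 1) = r + 1 + 1 + i from by omega]
            rw [h1, show r + 1 + 0 = r + 1 from rfl]
            ring
          rw [hx]
          have er2 : (r + 1) * (r + 1) = r * r + r + (r + 1) := by ring
          rw [er2, pow_add, pow_add]
          ring
        · have h0 : M - r = 0 := by omega
          have h1 : M - (r + 1) = 0 := by omega
          rw [gb_eq_zero q (show M < r + 1 by omega), h0, h1]
          simp only [range_zero, prod_empty]
          ring
      have hGz : G (M + 1) = 0 := by
        have : U (M + 1) = 0 := by
          simp only [hU]
          rw [gb_eq_zero q (Nat.lt_succ_self M)]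
          ring
        simp only [hG, this]
        ring
      have hTG0 : T 0 = U 0 * (1 - c) := by
        simp only [hTdef, hU, gb_zero_right]
        have h1 : ∏ i ∈ range (M + 1 - 0), (1 - c * q ^ (0 + i))
            = ∏ i ∈ range (M + 1), (1 - c * q ^ i) := by
          rw [Nat.sub_zero]
          exact prod_congr rfl fun i _ => by rw [Nat.zero_add]
        have h2 : ∏ i ∈ range (M - 0), (1 - c * q ^ (0 + 1 + i))
            = ∏ i ∈ range M, (1 - c * q ^ (i + 1)) := by
          rw [Nat.sub_zero]
          exact prod_congr rfl fun i _ => by rw [show 0 + 1 + i = i + 1 from by omega]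
        rw [h1, h2, prod_range_succ' (fun i => 1 - c * q ^ i) M]
        simp only [Nat.zero_mul, Nat.mul_zero, pow_zero, one_mul, mul_one]
        try ring
      calc ∑ r ∈ range (M + 1 + 1), T r
          = (∑ r ∈ range (M + 1), T (r + 1)) + T 0 := sum_range_succ' T (M + 1)
        _ = (∑ r ∈ range (M + 1), (G (r + 1) + U r * (c * q ^ r))) + T 0 := by
            rw [sum_congr rfl hT]
        _ = (∑ r ∈ range (M + 1), G (r + 1)) + (∑ r ∈ range (M + 1), U r * (c * q ^ r)) + T 0 := by
            rw [sum_add_distrib]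
        _ = ((∑ r ∈ range (M + 1), G r) + G (M + 1) - G 0)
              + (∑ r ∈ range (M + 1), U r * (c * q ^ r)) + T 0 := by
            have h1 : ∑ r ∈ range (M + 1 + 1), G r = (∑ r ∈ range (M + 1), G (r + 1)) + G 0 :=
              sum_range_succ' G (M + 1)
            have h2 : ∑ r ∈ range (M + 1 + 1), G r = (∑ r ∈ range (M + 1), G r) + G (M + 1) :=
              sum_range_succ G (M + 1)
            have : ∑ r ∈ range (M + 1), G (r + 1)
                = (∑ r ∈ range (M + 1), G r) + G (M + 1) - G 0 := by
              rw [← h2, h1]; ring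
            rw [this]
        _ = 1 := by
            rw [hGz]
            have hsub : ∑ r ∈ range (M + 1), G r
                = (∑ r ∈ range (M + 1), U r) - ∑ r ∈ range (M + 1), U r * (c * q ^ r) := by
              simp only [hG]
              rw [sum_sub_distrib]
            rw [hsub, hIH', hTG0]
            simp only [hG, hU]
            simp only [pow_zero, mul_one]
            ring

end A

section B
variable {K : Type*} [Field K] {ζ : K} {M : ℕ} (hζ : IsPrimitiveRoot ζ (2 * M + 1))

lemma sum_odds (r : ℕ) : ∑ i ∈ range r, (2 * i + 1) = r * r := by
  induction r with
  | zero => rfl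
  | succ t ih => rw [sum_range_succ, ih]; ring

include hζ

lemma one_sub_pow_ne {i : ℕ} (h0 : 0 < i) (h1 : i < 2 * M + 1) : (1 : K) - ζ ^ i ≠ 0 := by
  intro h
  exact hζ.pow_ne_one_of_pos_of_lt h0.ne' h1 (sub_eq_zero.mp h).symm

lemma denom_ne {r : ℕ} (hrM : r ≤ M) : (∏ i ∈ range r, (1 - ζ ^ (i + 1))) ≠ 0 := by
  rw [Finset.prod_ne_zero_iff]
  intro i hi
  have : i < r := mem_range.mp hi
  exact one_sub_pow_ne hζ (by omega) (by omega)

lemma numer_flip {r : ℕ} (hrM : r ≤ M) :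
    ∏ i ∈ range r, (1 - ζ ^ (2 * i + 1))
      = (-1) ^ r * ζ ^ (r * r) * ∏ i ∈ range r, ((1 - ζ ^ (M - i)) * (1 + ζ ^ (M - i))) := by
  have step : ∀ i ∈ range r, (1 - ζ ^ (2 * i + 1))
      = ((-1) * ζ ^ (2 * i + 1)) * ((1 - ζ ^ (M - i)) * (1 + ζ ^ (M - i))) := by
    intro i hi
    have hi' : i < r := mem_range.mp hi
    have h1 : ζ ^ (2 * i + 1) * ζ ^ (2 * (M - i)) = 1 := by
      rw [← pow_add, show 2 * i + 1 + 2 * (M - i) = 2 * M + 1 by omega, hζ.pow_eq_one]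
    have h2 : ζ ^ (2 * (M - i)) = ζ ^ (M - i) * ζ ^ (M - i) := by
      rw [← pow_add, show M - i + (M - i) = 2 * (M - i) by omega]
    linear_combination (-1 : K) * h1 + ζ ^ (2 * i + 1) * h2
  rw [prod_congr rfl step, prod_mul_distrib, prod_mul_distrib, prod_const,
    Finset.prod_pow_eq_pow_sum, sum_odds, card_range]

end B

section B2
variable {K : Type*} [Field K] {ζ : K} {M : ℕ} (hζ : IsPrimitiveRoot ζ (2 * M + 1))

include hζ

/-- The crux identity:
`∑_{r=0}^{M} ζ^r (ζ;ζ²)_r/(ζ;ζ)_r = (-1)^M ζ^{M(M+1)}`. -/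
lemma crux :
    ∑ r ∈ range (M + 1),
        ζ ^ r * (∏ i ∈ range r, (1 - ζ ^ (2 * i + 1))) / ∏ i ∈ range r, (1 - ζ ^ (i + 1))
      = (-1) ^ M * ζ ^ (M * (M + 1)) := by
  have hKI : ∑ r ∈ range (M + 1), (gb ζ M r * ζ ^ (r * (r - 1)) * (-ζ) ^ r
      * ∏ i ∈ range (M - r), (1 - -ζ * ζ ^ (r + i))) = 1 := keyident ζ M (-ζ)
  set g : ℕ → K := fun r => gb ζ M r * ζ ^ (r * (r - 1)) * (-ζ) ^ r
      * ∏ i ∈ range (M - r), (1 - -ζ * ζ ^ (r + i)) with hg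
  have hterm : ∀ r ∈ range (M + 1),
      ζ ^ r * (∏ i ∈ range r, (1 - ζ ^ (2 * i + 1))) / ∏ i ∈ range r, (1 - ζ ^ (i + 1))
        = (-1) ^ M * ζ ^ (M * (M + 1)) * g (M - r) := by
    intro r hr
    have hrM : r ≤ M := by have := mem_range.mp hr; omega
    have hD := denom_ne hζ hrM
    rw [div_eq_iff hD, numer_flip hζ hrM]
    -- reflection for the (1 - ζ^{M-i}) part
    have hrefl1 : ∏ i ∈ range r, (1 - ζ ^ (M - i)) = ∏ j ∈ range r, (1 - ζ ^ (M - r + 1 + j)) := by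
      rw [← prod_range_reflect (fun j => 1 - ζ ^ (M - r + 1 + j)) r]
      exact prod_congr rfl fun i hi => by
        have := mem_range.mp hi
        rw [show M - r + 1 + (r - 1 - i) = M - i from by omega]
    have hrefl2 : ∏ i ∈ range r, (1 + ζ ^ (M - i)) = ∏ j ∈ range r, (1 + ζ ^ (M - r + 1 + j)) := by
      rw [← prod_range_reflect (fun j => 1 + ζ ^ (M - r + 1 + j)) r]
      exact prod_congr rfl fun i hi => by
        have := mem_range.mp hi
        rw [show M - r + 1 + (r - 1 - i) = M - i from by omega]
    have hgb := gbP2 ζ M (M - r) (by omega)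
    rw [show M - (M - r) = r from by omega] at hgb
    have hgbr : ∏ j ∈ range r, (1 - ζ ^ (M - r + 1 + j))
        = gb ζ M (M - r) * ∏ j ∈ range r, (1 - ζ ^ (j + 1)) := hgb.symm
    -- expand g (M - r)
    have hgexp : g (M - r) = gb ζ M (M - r) * ζ ^ ((M - r) * (M - r - 1)) * (-ζ) ^ (M - r)
        * ∏ j ∈ range r, (1 + ζ ^ (M - r + 1 + j)) := by
      simp only [hg]
      rw [show M - (M - r) = r from by omega]
      congr 1
      exact prod_congr rfl fun j _ => by
        rw [show M - r + 1 + j = (M - r + j) + 1 from by omega, pow_succ']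
        ring
    rw [hgexp, ← hrefl2, prod_mul_distrib, hrefl1, hgbr]
    -- now a scalar identity
    have hsc : (-1 : K) ^ M * ζ ^ (M * (M + 1)) * ((-1) ^ (M - r) * ζ ^ (M - r))
        * ζ ^ ((M - r) * (M - r - 1)) = (-1) ^ r * ζ ^ (r * r) * ζ ^ r := by
      have hsign : (-1 : K) ^ M * (-1) ^ (M - r) = (-1) ^ r := by
        rw [← pow_add, show M + (M - r) = 2 * (M - r) + r from by omega, pow_add, pow_mul,
          neg_one_sq, one_pow, one_mul]
      have hexp : M * (M + 1) + (M - r) + (M - r) * (M - r - 1)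
          = (r * r + r) + (2 * M + 1) * (M - r) := by
        obtain ⟨s, rfl⟩ : ∃ s, M = r + s := ⟨M - r, by omega⟩
        rw [show r + s - r = s from by omega]
        cases s with
        | zero => ring
        | succ t =>
            rw [show t + 1 - 1 = t from by omega]
            ring
      have hz : ζ ^ (M * (M + 1)) * ζ ^ (M - r) * ζ ^ ((M - r) * (M - r - 1))
          = ζ ^ (r * r) * ζ ^ r := by
        rw [← pow_add, ← pow_add, hexp, pow_add, pow_mul, hζ.pow_eq_one, one_pow, mul_one,
          pow_add]
      calc (-1 : K) ^ M * ζ ^ (M * (M + 1)) * ((-1) ^ (M - r) * ζ ^ (M - r))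
            * ζ ^ ((M - r) * (M - r - 1))
          = ((-1 : K) ^ M * (-1) ^ (M - r))
              * (ζ ^ (M * (M + 1)) * ζ ^ (M - r) * ζ ^ ((M - r) * (M - r - 1))) := by ring
        _ = (-1) ^ r * (ζ ^ (r * r) * ζ ^ r) := by rw [hsign, hz]
        _ = (-1) ^ r * ζ ^ (r * r) * ζ ^ r := by ring
    have hneg : (-ζ : K) ^ (M - r) = (-1) ^ (M - r) * ζ ^ (M - r) := by
      rw [neg_pow]
    rw [hneg]
    linear_combination (-(gb ζ M (M - r) * (∏ i ∈ range r, (1 + ζ ^ (M - i)))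
      * (∏ j ∈ range r, (1 - ζ ^ (j + 1))))) * hsc
  rw [sum_congr rfl hterm, ← mul_sum]
  have hrefl : ∑ r ∈ range (M + 1), g (M - r) = ∑ r ∈ range (M + 1), g r := by
    rw [← sum_range_reflect g (M + 1)]
    exact sum_congr rfl fun r hr => by rw [show M + 1 - 1 - r = M - r from by omega]
  rw [hrefl, hKI, mul_one]

end B2


section C
-- polynomial building blocks over ℚ
noncomputable def Pp (k : ℕ) : ℚ[X] := ∏ i ∈ range k, (1 - X ^ (i + 1))
noncomputable def Pm (k : ℕ) : ℚ[X] := ∏ i ∈ range k, (1 + X ^ (i + 1))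
noncomputable def Po (k : ℕ) : ℚ[X] := ∏ i ∈ range k, (1 - X ^ (2 * i + 1))
noncomputable def geo (n t : ℕ) : ℚ[X] := ∑ s ∈ range t, X ^ (n * s)
noncomputable def Bp (n k : ℕ) : ℚ[X] :=
  ∏ i ∈ range k, (if n ∣ i + 1 then geo n ((i + 1) / n) else 1)
noncomputable def Cp (n k : ℕ) : ℚ[X] :=
  ∏ i ∈ range k, (if n ∣ i + 1 then 1 else 1 - X ^ (i + 1))
noncomputable def Bo (n k : ℕ) : ℚ[X] :=
  ∏ i ∈ range k, (if n ∣ 2 * i + 1 then geo n ((2 * i + 1) / n) else 1)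
noncomputable def Co (n k : ℕ) : ℚ[X] :=
  ∏ i ∈ range k, (if n ∣ 2 * i + 1 then 1 else 1 - X ^ (2 * i + 1))

lemma Pp_split (k : ℕ) : Pp (2 * k) = Po k * Pp k * Pm k := by
  induction k with
  | zero => simp [Pp, Po, Pm]
  | succ t ih =>
      simp only [Pp, Po, Pm] at *
      rw [show 2 * (t + 1) = 2 * t + 1 + 1 by ring,
        prod_range_succ (fun i => (1 : ℚ[X]) - X ^ (i + 1)) (2 * t + 1),
        prod_range_succ (fun i => (1 : ℚ[X]) - X ^ (i + 1)) (2 * t),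
        prod_range_succ (fun i => (1 : ℚ[X]) - X ^ (2 * i + 1)) t,
        prod_range_succ (fun i => (1 : ℚ[X]) - X ^ (i + 1)) t,
        prod_range_succ (fun i => (1 : ℚ[X]) + X ^ (i + 1)) t, ih]
      have e2 : (1 : ℚ[X]) - X ^ (2 * t + 1 + 1) = (1 - X ^ (t + 1)) * (1 + X ^ (t + 1)) := by
        rw [show 2 * t + 1 + 1 = (t + 1) + (t + 1) by ring, pow_add]
        ring
      rw [e2]
      ring

lemma geo_mul (n t : ℕ) : (1 - X ^ n) * geo n t = 1 - (X : ℚ[X]) ^ (n * t) := by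
  rw [geo]
  induction t with
  | zero => simp
  | succ s ih =>
      rw [sum_range_succ, mul_add, ih, pow_mul, pow_mul, pow_succ]
      ring_nf

-- counting lemmas
lemma cardD (n k : ℕ) : ((range k).filter (fun i => n ∣ i + 1)).card = k / n := by
  induction k with
  | zero => simp
  | succ t ih =>
      rw [range_add_one, filter_insert, Nat.succ_div]
      by_cases h : n ∣ t + 1
      · rw [if_pos h, if_pos h, card_insert_of_notMem (by simp), ih]
      · rw [if_neg h, if_neg h, ih, add_zero]

lemma odd_dvd_iff (M t : ℕ) : (2 * M + 1) ∣ 2 * t + 1 ↔ (2 * M + 1) ∣ t + M + 1 := by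
  have hcop : Nat.Coprime (2 * M + 1) 2 :=
    Nat.coprime_two_right.mpr ⟨M, by ring⟩
  constructor
  · intro h
    have h2 : (2 * M + 1) ∣ (t + M + 1) * 2 := by
      have : (t + M + 1) * 2 = (2 * t + 1) + (2 * M + 1) := by ring
      rw [this]
      exact Nat.dvd_add h dvd_rfl
    exact hcop.dvd_of_dvd_mul_right h2
  · intro h
    have h2 : (2 * M + 1) ∣ (t + M + 1) * 2 := Dvd.dvd.mul_right h 2
    have h3 : (t + M + 1) * 2 = (2 * M + 1) + (2 * t + 1) := by ring
    rw [h3] at h2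
    exact (Nat.dvd_add_right dvd_rfl).mp h2

lemma cardN (M k : ℕ) :
    ((range k).filter (fun i => (2 * M + 1) ∣ 2 * i + 1)).card = (k + M) / (2 * M + 1) := by
  induction k with
  | zero => simp [Nat.div_eq_of_lt (show M < 2 * M + 1 by omega)]
  | succ t ih =>
      have hiff := odd_dvd_iff M t
      rw [range_add_one, filter_insert, show t + 1 + M = t + M + 1 by omega, Nat.succ_div]
      by_cases h : (2 * M + 1) ∣ 2 * t + 1
      · rw [if_pos h, if_pos (hiff.mp h), card_insert_of_notMem (by simp), ih]
      · rw [if_neg h, if_neg (fun hc => h (hiff.mpr hc)), ih]; omega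

end C


section PeriodicProd
variable {K : Type*} [CommRing K]

lemma periodic_shift_one {n : ℕ} (g : ℕ → K) (hper : ∀ i, g (i + n) = g i) :
    ∏ i ∈ range n, g (i + 1) = ∏ i ∈ range n, g i := by
  cases n with
  | zero => simp
  | succ m =>
      rw [prod_range_succ (fun i => g (i + 1)) m, prod_range_succ' g m]
      congr 1
      have h := hper 0
      rw [Nat.zero_add] at h
      exact h

lemma periodic_shift {n : ℕ} (g : ℕ → K) (hper : ∀ i, g (i + n) = g i) (t : ℕ) :
    ∏ i ∈ range n, g (i + t) = ∏ i ∈ range n, g i := by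
  induction t with
  | zero => simp
  | succ s ih =>
      have h1 : ∏ i ∈ range n, g (i + (s + 1)) = ∏ i ∈ range n, g ((i + 1) + s) :=
        prod_congr rfl fun i _ => by rw [show i + (s + 1) = i + 1 + s by omega]
      have h2 := periodic_shift_one (fun i => g (i + s))
        (fun i => by show g (i + n + s) = g (i + s); rw [show i + n + s = (i + s) + n by omega, hper])
      rw [h1, h2, ih]

lemma periodic_block {n : ℕ} (g : ℕ → K) (hper : ∀ i, g (i + n) = g i) (a r : ℕ) :
    ∏ i ∈ range (n * a + r), g i = (∏ i ∈ range n, g i) ^ a * ∏ i ∈ range r, g i := by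
  induction a with
  | zero => simp
  | succ b ih =>
      have he : n * (b + 1) + r = n + (n * b + r) := by ring
      rw [he, prod_range_add, pow_succ]
      have h2 : ∏ i ∈ range (n * b + r), g (n + i) = ∏ i ∈ range (n * b + r), g i :=
        prod_congr rfl fun i _ => by rw [show n + i = i + n by omega, hper]
      rw [h2, ih]
      ring

lemma periodic_prod_eq {n : ℕ} (hn : 0 < n) (g : ℕ → K) (hper : ∀ i, g (i + n) = g i) (k : ℕ) :
    ∏ i ∈ range k, g i = (∏ i ∈ range n, g i) ^ (k / n) * ∏ i ∈ range (k % n), g i := by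
  conv_lhs => rw [← Nat.div_add_mod k n]
  exact periodic_block g hper (k / n) (k % n)

lemma prod_even_odd (g : ℕ → K) (m : ℕ) :
    ∏ s ∈ range (2 * m), g s = (∏ i ∈ range m, g (2 * i)) * ∏ i ∈ range m, g (2 * i + 1) := by
  induction m with
  | zero => simp
  | succ t ih =>
      rw [show 2 * (t + 1) = 2 * t + 1 + 1 by ring, prod_range_succ, prod_range_succ, ih,
        prod_range_succ, prod_range_succ]
      ring
end PeriodicProd


def oddF (a : ℕ) : ℕ := ∏ c ∈ range a, (2 * c + 1)

lemma oddF_fact (a : ℕ) : oddF a * 2 ^ a * a.factorial = (2 * a).factorial := by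
  induction a with
  | zero => rfl
  | succ t ih =>
      rw [oddF, prod_range_succ, ← oddF, pow_succ, Nat.factorial_succ,
        show 2 * (t + 1) = 2 * t + 1 + 1 by ring, Nat.factorial_succ, Nat.factorial_succ, ← ih]
      ring

section Eval
variable {K : Type*} [Field K] [CharZero K] {ζ : K} {M : ℕ}
  (hζ : IsPrimitiveRoot ζ (2 * M + 1))

noncomputable def hKf (ζ : K) (n : ℕ) : ℕ → K := fun s => if n ∣ s then 1 else 1 - ζ ^ s

noncomputable def piK (ζ : K) (M : ℕ) : K := ∏ s ∈ range (2 * M + 1), hKf ζ (2 * M + 1) s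

include hζ

lemma ev_geo (t : ℕ) : aeval ζ (geo (2 * M + 1) t) = (t : K) := by
  simp only [geo, map_sum, map_pow, aeval_X, pow_mul, hζ.pow_eq_one, one_pow, sum_const,
    card_range, nsmul_eq_mul, mul_one]

lemma ev_Bp (k : ℕ) : aeval ζ (Bp (2 * M + 1) k) = ((k / (2 * M + 1)).factorial : K) := by
  induction k with
  | zero => simp [Bp]
  | succ t ih =>
      rw [Bp, prod_range_succ, ← Bp, map_mul, ih, Nat.succ_div]
      by_cases h : (2 * M + 1) ∣ t + 1
      · rw [if_pos h, if_pos h, ev_geo hζ]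
        rw [Nat.factorial_succ]
        push_cast
        ring
      · rw [if_neg h, if_neg h, map_one, mul_one]
        norm_num

lemma ev_Bo (k : ℕ) :
    aeval ζ (Bo (2 * M + 1) k) = (oddF ((k + M) / (2 * M + 1)) : K) := by
  induction k with
  | zero => simp [Bo, oddF, Nat.div_eq_of_lt (show M < 2 * M + 1 by omega)]
  | succ t ih =>
      rw [Bo, prod_range_succ, ← Bo, map_mul, ih]
      have hiff := odd_dvd_iff M t
      by_cases h : (2 * M + 1) ∣ 2 * t + 1
      · have hdvd : (2 * M + 1) ∣ t + M + 1 := hiff.mp h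
        have hdd : (t + 1 + M) / (2 * M + 1) = (t + M) / (2 * M + 1) + 1 := by
          rw [show t + 1 + M = (t + M) + 1 by omega, Nat.succ_div, if_pos hdvd]
        have ha : t + M + 1 = (2 * M + 1) * ((t + M) / (2 * M + 1) + 1) := by
          have h2 : (t + M + 1) / (2 * M + 1) = (t + M) / (2 * M + 1) + 1 := by
            rw [show t + M + 1 = (t + M) + 1 from rfl, Nat.succ_div, if_pos hdvd]
          rw [← h2]
          exact (Nat.mul_div_cancel' hdvd).symm
        have hodd_div : (2 * t + 1) / (2 * M + 1) = 2 * ((t + M) / (2 * M + 1)) + 1 := by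
          set a := (t + M) / (2 * M + 1) with hadef
          have h3 : (2 * M + 1) * (2 * a + 1) + (2 * M + 1) = 2 * ((2 * M + 1) * (a + 1)) := by
            ring
          have h2 : 2 * t + 1 = (2 * M + 1) * (2 * a + 1) := by linarith [ha, h3]
          rw [h2, Nat.mul_div_cancel_left _ (show 0 < 2 * M + 1 by omega)]
        rw [if_pos h, ev_geo hζ, hodd_div, hdd]
        have hof : oddF ((t + M) / (2 * M + 1) + 1)
            = oddF ((t + M) / (2 * M + 1)) * (2 * ((t + M) / (2 * M + 1)) + 1) := by
          rw [oddF, prod_range_succ, ← oddF]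
        rw [hof]
        push_cast
        ring
      · rw [if_neg h, map_one, mul_one, show t + 1 + M = (t + M) + 1 by omega, Nat.succ_div,
          if_neg (fun hc => h (hiff.mpr hc))]
        norm_num

lemma hK_per : ∀ s, hKf ζ (2 * M + 1) (s + (2 * M + 1)) = hKf ζ (2 * M + 1) s := by
  intro s
  unfold hKf
  have hd : (2 * M + 1) ∣ s + (2 * M + 1) ↔ (2 * M + 1) ∣ s := Nat.dvd_add_self_right
  by_cases h : (2 * M + 1) ∣ s
  · rw [if_pos h, if_pos (hd.mpr h)]
  · rw [if_neg h, if_neg (fun hc => h (hd.mp hc)), pow_add, hζ.pow_eq_one, mul_one]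

lemma piK_ne : piK ζ M ≠ 0 := by
  rw [piK, Finset.prod_ne_zero_iff]
  intro s hs
  unfold hKf
  by_cases h : (2 * M + 1) ∣ s
  · rw [if_pos h]; exact one_ne_zero
  · rw [if_neg h]
    have hs0 : 0 < s := by
      rcases Nat.eq_zero_or_pos s with h0 | h0
      · exact absurd (h0 ▸ dvd_zero _) h
      · exact h0
    exact one_sub_pow_ne hζ hs0 (mem_range.mp hs)

lemma pi_odd_eq :
    ∏ i ∈ range (2 * M + 1), hKf ζ (2 * M + 1) (2 * i + 1) = piK ζ M := by
  rw [piK]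
  set h := hKf ζ (2 * M + 1) with hh
  have hper : ∀ s, h (s + (2 * M + 1)) = h s := hK_per hζ
  have h1 : ∏ i ∈ range (2 * M + 1), h (2 * i + 1)
      = ∏ i ∈ range (2 * M + 1), h (2 * (i + (M + 1))) :=
    prod_congr rfl fun i _ => by
      rw [show 2 * (i + (M + 1)) = (2 * i + 1) + (2 * M + 1) by ring, hper]
  have hperE : ∀ i, h (2 * (i + (2 * M + 1))) = h (2 * i) := fun i => by
    rw [show 2 * (i + (2 * M + 1)) = (2 * i + (2 * M + 1)) + (2 * M + 1) by ring, hper, hper]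
  have h2 : ∏ i ∈ range (2 * M + 1), h (2 * (i + (M + 1)))
      = ∏ i ∈ range (2 * M + 1), h (2 * i) :=
    periodic_shift (fun i => h (2 * i)) hperE (M + 1)
  have hL : ∏ i ∈ range (2 * M + 1), h (2 * i)
      = (∏ i ∈ range (M + 1), h (2 * i)) * ∏ i ∈ range M, h (2 * i + 1) := by
    rw [show 2 * M + 1 = (M + 1) + M by omega, prod_range_add]
    congr 1
    exact prod_congr rfl fun i _ => by
      rw [show 2 * (M + 1 + i) = (2 * i + 1) + (2 * M + 1) by ring, hper]
  have hR : ∏ s ∈ range (2 * M + 1), h s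
      = ((∏ i ∈ range M, h (2 * i)) * ∏ i ∈ range M, h (2 * i + 1)) * h (2 * M) := by
    rw [prod_range_succ, prod_even_odd h M]
  have hL2 : ∏ i ∈ range (M + 1), h (2 * i) = (∏ i ∈ range M, h (2 * i)) * h (2 * M) :=
    prod_range_succ _ M
  rw [h1, h2, hL, hL2, hR]
  ring

lemma ev_Cp (k : ℕ) :
    aeval ζ (Cp (2 * M + 1) k)
      = piK ζ M ^ (k / (2 * M + 1))
        * ∏ i ∈ range (k % (2 * M + 1)), hKf ζ (2 * M + 1) (i + 1) := by
  have h1 : aeval ζ (Cp (2 * M + 1) k) = ∏ i ∈ range k, hKf ζ (2 * M + 1) (i + 1) := by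
    rw [Cp, map_prod]
    refine prod_congr rfl fun i _ => ?_
    rw [apply_ite (aeval ζ), map_one, map_sub, map_one, map_pow, aeval_X]
    rfl
  have hper : ∀ i, hKf ζ (2 * M + 1) ((i + (2 * M + 1)) + 1) = hKf ζ (2 * M + 1) (i + 1) := by
    intro i
    rw [show (i + (2 * M + 1)) + 1 = (i + 1) + (2 * M + 1) by omega, hK_per hζ]
  rw [h1, periodic_prod_eq (show 0 < 2 * M + 1 by omega)
    (fun i => hKf ζ (2 * M + 1) (i + 1)) hper k]
  congr 1
  rw [periodic_shift_one (hKf ζ (2 * M + 1)) (hK_per hζ), piK]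

lemma ev_Co (k : ℕ) :
    aeval ζ (Co (2 * M + 1) k)
      = piK ζ M ^ (k / (2 * M + 1))
        * ∏ i ∈ range (k % (2 * M + 1)), hKf ζ (2 * M + 1) (2 * i + 1) := by
  have h1 : aeval ζ (Co (2 * M + 1) k) = ∏ i ∈ range k, hKf ζ (2 * M + 1) (2 * i + 1) := by
    rw [Co, map_prod]
    refine prod_congr rfl fun i _ => ?_
    rw [apply_ite (aeval ζ), map_one, map_sub, map_one, map_pow, aeval_X]
    rfl
  have hper : ∀ i, hKf ζ (2 * M + 1) (2 * (i + (2 * M + 1)) + 1)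
      = hKf ζ (2 * M + 1) (2 * i + 1) := by
    intro i
    rw [show 2 * (i + (2 * M + 1)) + 1 = ((2 * i + 1) + (2 * M + 1)) + (2 * M + 1) by ring,
      hK_per hζ, hK_per hζ]
  rw [h1, periodic_prod_eq (show 0 < 2 * M + 1 by omega)
    (fun i => hKf ζ (2 * M + 1) (2 * i + 1)) hper k]
  congr 1
  rw [pi_odd_eq hζ]

lemma tailD {r : ℕ} (hr : r < 2 * M + 1) :
    ∏ i ∈ range r, hKf ζ (2 * M + 1) (i + 1) = ∏ i ∈ range r, (1 - ζ ^ (i + 1)) :=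
  prod_congr rfl fun i hi => by
    have hi' : i < r := mem_range.mp hi
    unfold hKf
    rw [if_neg (fun hc => by have := Nat.le_of_dvd (by omega) hc; omega)]

lemma tailN {r : ℕ} (hr : r ≤ M) :
    ∏ i ∈ range r, hKf ζ (2 * M + 1) (2 * i + 1) = ∏ i ∈ range r, (1 - ζ ^ (2 * i + 1)) :=
  prod_congr rfl fun i hi => by
    have hi' : i < r := mem_range.mp hi
    unfold hKf
    rw [if_neg (fun hc => by have := Nat.le_of_dvd (by omega) hc; omega)]

end Eval

section Asm

lemma Pp_ne (k : ℕ) : Pp k ≠ 0 := by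
  unfold Pp
  rw [Finset.prod_ne_zero_iff]
  intro i _ h
  have h0 := congrArg (Polynomial.eval 0) h
  simp [zero_pow] at h0

lemma Pm_ne (k : ℕ) : Pm k ≠ 0 := by
  unfold Pm
  rw [Finset.prod_ne_zero_iff]
  intro i _ h
  have h0 := congrArg (Polynomial.eval 0) h
  simp [zero_pow] at h0

lemma poch_X_eq (k : ℕ) :
    poch RatFunc.X RatFunc.X k = algebraMap ℚ[X] (RatFunc ℚ) (Pp k) := by
  unfold poch Pp
  rw [map_prod]
  exact prod_congr rfl fun i _ => by
    rw [map_sub, map_one, map_pow, RatFunc.algebraMap_X, pow_succ']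

lemma poch_negX_eq (k : ℕ) :
    poch (-RatFunc.X) RatFunc.X k = algebraMap ℚ[X] (RatFunc ℚ) (Pm k) := by
  unfold poch Pm
  rw [map_prod]
  refine prod_congr rfl fun i _ => ?_
  rw [map_add, map_one, map_pow, RatFunc.algebraMap_X, pow_succ']
  ring

lemma summand_eq (k : ℕ) :
    RatFunc.X ^ k / poch (-RatFunc.X) RatFunc.X k * qbinom (2 * k) k
      = algebraMap ℚ[X] (RatFunc ℚ) (X ^ k * Po k) / algebraMap ℚ[X] (RatFunc ℚ) (Pp k) := by
  rw [qbinom, if_pos (by omega : k ≤ 2 * k), show 2 * k - k = k by omega,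
    poch_X_eq, poch_X_eq, poch_negX_eq, Pp_split k, map_mul, map_mul, map_mul, map_pow,
    RatFunc.algebraMap_X]
  have h1 : algebraMap ℚ[X] (RatFunc ℚ) (Pp k) ≠ 0 := by
    simpa using Pp_ne k
  have h2 : algebraMap ℚ[X] (RatFunc ℚ) (Pm k) ≠ 0 := by
    simpa using Pm_ne k
  field_simp

lemma Pp_factor (n k : ℕ) (hn : 0 < n) :
    Pp k = (1 - X ^ n) ^ (k / n) * (Bp n k * Cp n k) := by
  have hfac : ∀ i ∈ range k, (1 : ℚ[X]) - X ^ (i + 1)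
      = (if n ∣ i + 1 then 1 - X ^ n else 1)
        * ((if n ∣ i + 1 then geo n ((i + 1) / n) else 1)
          * (if n ∣ i + 1 then 1 else 1 - X ^ (i + 1))) := by
    intro i _
    by_cases h : n ∣ i + 1
    · rw [if_pos h, if_pos h, if_pos h, mul_one, geo_mul, Nat.mul_div_cancel' h]
    · rw [if_neg h, if_neg h, if_neg h, one_mul, one_mul]
  have hA : ∏ i ∈ range k, (if n ∣ i + 1 then (1 : ℚ[X]) - X ^ n else 1)
      = (1 - X ^ n) ^ (k / n) := by
    rw [prod_ite, prod_const, prod_const_one, mul_one, cardD]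
  calc Pp k = ∏ i ∈ range k, ((if n ∣ i + 1 then (1 : ℚ[X]) - X ^ n else 1)
        * ((if n ∣ i + 1 then geo n ((i + 1) / n) else 1)
          * (if n ∣ i + 1 then 1 else 1 - X ^ (i + 1)))) := prod_congr rfl hfac
    _ = (∏ i ∈ range k, (if n ∣ i + 1 then (1 : ℚ[X]) - X ^ n else 1))
          * ((∏ i ∈ range k, (if n ∣ i + 1 then geo n ((i + 1) / n) else 1))
            * ∏ i ∈ range k, (if n ∣ i + 1 then 1 else 1 - X ^ (i + 1))) := by
        rw [prod_mul_distrib, prod_mul_distrib]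
    _ = (1 - X ^ n) ^ (k / n) * (Bp n k * Cp n k) := by rw [hA]; rfl

lemma Po_factor (M k : ℕ) :
    Po k = (1 - X ^ (2 * M + 1)) ^ ((k + M) / (2 * M + 1))
      * (Bo (2 * M + 1) k * Co (2 * M + 1) k) := by
  have hfac : ∀ i ∈ range k, (1 : ℚ[X]) - X ^ (2 * i + 1)
      = (if (2 * M + 1) ∣ 2 * i + 1 then 1 - X ^ (2 * M + 1) else 1)
        * ((if (2 * M + 1) ∣ 2 * i + 1 then geo (2 * M + 1) ((2 * i + 1) / (2 * M + 1)) else 1)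
          * (if (2 * M + 1) ∣ 2 * i + 1 then 1 else 1 - X ^ (2 * i + 1))) := by
    intro i _
    by_cases h : (2 * M + 1) ∣ 2 * i + 1
    · rw [if_pos h, if_pos h, if_pos h, mul_one, geo_mul, Nat.mul_div_cancel' h]
    · rw [if_neg h, if_neg h, if_neg h, one_mul, one_mul]
  have hA : ∏ i ∈ range k, (if (2 * M + 1) ∣ 2 * i + 1 then (1 : ℚ[X]) - X ^ (2 * M + 1) else 1)
      = (1 - X ^ (2 * M + 1)) ^ ((k + M) / (2 * M + 1)) := by
    rw [prod_ite, prod_const, prod_const_one, mul_one, cardN]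
  calc Po k = ∏ i ∈ range k, ((if (2 * M + 1) ∣ 2 * i + 1 then (1 : ℚ[X]) - X ^ (2 * M + 1) else 1)
        * ((if (2 * M + 1) ∣ 2 * i + 1 then geo (2 * M + 1) ((2 * i + 1) / (2 * M + 1)) else 1)
          * (if (2 * M + 1) ∣ 2 * i + 1 then 1 else 1 - X ^ (2 * i + 1)))) := prod_congr rfl hfac
    _ = (∏ i ∈ range k, (if (2 * M + 1) ∣ 2 * i + 1 then (1 : ℚ[X]) - X ^ (2 * M + 1) else 1))
          * ((∏ i ∈ range k,
              (if (2 * M + 1) ∣ 2 * i + 1 then geo (2 * M + 1) ((2 * i + 1) / (2 * M + 1)) else 1))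
            * ∏ i ∈ range k, (if (2 * M + 1) ∣ 2 * i + 1 then 1 else 1 - X ^ (2 * i + 1))) := by
        rw [prod_mul_distrib, prod_mul_distrib]
    _ = _ := by rw [hA]; rfl

noncomputable def Dk (M k : ℕ) : ℚ[X] := Bp (2 * M + 1) k * Cp (2 * M + 1) k

noncomputable def Nk (M k : ℕ) : ℚ[X] :=
  X ^ k * (1 - X ^ (2 * M + 1)) ^ ((k + M) / (2 * M + 1) - k / (2 * M + 1))
    * (Bo (2 * M + 1) k * Co (2 * M + 1) k)

lemma key_poly (M k : ℕ) :
    X ^ k * Po k * Dk M k = Nk M k * Pp k := by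
  have hle : k / (2 * M + 1) ≤ (k + M) / (2 * M + 1) :=
    Nat.div_le_div_right (by omega)
  have hpow : ((1 : ℚ[X]) - X ^ (2 * M + 1)) ^ ((k + M) / (2 * M + 1) - k / (2 * M + 1))
      * (1 - X ^ (2 * M + 1)) ^ (k / (2 * M + 1))
      = (1 - X ^ (2 * M + 1)) ^ ((k + M) / (2 * M + 1)) := by
    rw [← pow_add, Nat.sub_add_cancel hle]
  rw [Dk, Nk, Po_factor M k, Pp_factor (2 * M + 1) k (by omega), ← hpow]
  ring

lemma summand_ND (M k : ℕ) :
    (RatFunc.X ^ k / poch (-RatFunc.X) RatFunc.X k * qbinom (2 * k) k)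
        * algebraMap ℚ[X] (RatFunc ℚ) (Dk M k)
      = algebraMap ℚ[X] (RatFunc ℚ) (Nk M k) := by
  rw [summand_eq k, div_mul_eq_mul_div, div_eq_iff (by simpa using Pp_ne k :
    algebraMap ℚ[X] (RatFunc ℚ) (Pp k) ≠ 0), ← map_mul, ← map_mul]
  exact congrArg _ (key_poly M k)
end Asm

section Eval2
variable {K : Type*} [Field K] [CharZero K] {ζ : K} {M : ℕ}
  (hζ : IsPrimitiveRoot ζ (2 * M + 1))

include hζ

lemma ev_Dk_ne (k : ℕ) : aeval ζ (Dk M k) ≠ 0 := by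
  rw [Dk, map_mul, ev_Bp hζ, ev_Cp hζ]
  have h1 : ((k / (2 * M + 1)).factorial : K) ≠ 0 := by
    exact_mod_cast Nat.cast_ne_zero.mpr (Nat.factorial_ne_zero _)
  have h2 : piK ζ M ^ (k / (2 * M + 1)) ≠ 0 := pow_ne_zero _ (piK_ne hζ)
  have h3 : (∏ i ∈ range (k % (2 * M + 1)), hKf ζ (2 * M + 1) (i + 1)) ≠ 0 := by
    rw [tailD hζ (Nat.mod_lt _ (by omega))]
    rw [Finset.prod_ne_zero_iff]
    intro i hi
    have hi' : i < k % (2 * M + 1) := mem_range.mp hi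
    have hmod : k % (2 * M + 1) < 2 * M + 1 := Nat.mod_lt _ (by omega)
    exact one_sub_pow_ne hζ (by omega) (by omega)
  exact mul_ne_zero h1 (mul_ne_zero h2 h3)

lemma v_val (a r : ℕ) (hr : r < 2 * M + 1) :
    aeval ζ (Nk M ((2 * M + 1) * a + r)) / aeval ζ (Dk M ((2 * M + 1) * a + r))
      = (oddF a : K) / (a.factorial : K)
        * (if r ≤ M then
            ζ ^ r * (∏ i ∈ range r, (1 - ζ ^ (2 * i + 1))) / ∏ i ∈ range r, (1 - ζ ^ (i + 1))
          else 0) := by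
  set k := (2 * M + 1) * a + r with hk
  have hdiv : k / (2 * M + 1) = a := by
    rw [hk, Nat.mul_add_div (by omega), Nat.div_eq_of_lt hr, Nat.add_zero]
  have hmod : k % (2 * M + 1) = r := by
    rw [hk, Nat.mul_add_mod, Nat.mod_eq_of_lt hr]
  have hζn : ζ ^ (2 * M + 1) = 1 := hζ.pow_eq_one
  have hζk : ζ ^ k = ζ ^ r := by
    rw [hk, pow_add, pow_mul, hζn, one_pow, one_mul]
  simp only [Nk, Dk, map_mul, map_pow, map_sub, map_one, aeval_X,
    ev_Bp hζ, ev_Cp hζ, ev_Bo hζ, ev_Co hζ]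
  rw [hdiv, hmod, hζn, hζk]
  by_cases hrM : r ≤ M
  · have hd2 : (k + M) / (2 * M + 1) = a := by
      rw [hk, show (2 * M + 1) * a + r + M = (2 * M + 1) * a + (r + M) by ring,
        Nat.mul_add_div (by omega), Nat.div_eq_of_lt (by omega), Nat.add_zero]
    rw [hd2, if_pos hrM, Nat.sub_self, pow_zero, mul_one, tailD hζ (by omega : r < 2 * M + 1),
      tailN hζ hrM]
    have hfa : ((a.factorial : K)) ≠ 0 := by
      exact_mod_cast Nat.cast_ne_zero.mpr (Nat.factorial_ne_zero _)
    have hpi : piK ζ M ^ a ≠ 0 := pow_ne_zero _ (piK_ne hζ)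
    have htd : (∏ i ∈ range r, (1 - ζ ^ (i + 1))) ≠ 0 := denom_ne hζ hrM
    field_simp
  · have hd2 : (k + M) / (2 * M + 1) = a + 1 := by
      rw [hk, show (2 * M + 1) * a + r + M = (2 * M + 1) * a + (r + M) by ring,
        Nat.mul_add_div (by omega)]
      congr 1
      exact Nat.div_eq_of_lt_le (by omega) (by omega)
    rw [hd2, if_neg hrM, show a + 1 - a = 1 by omega, pow_one, sub_self]
    simp
end Eval2

section Eval3
variable {K : Type*} [Field K] [CharZero K] {ζ : K} {M : ℕ}
  (hζ : IsPrimitiveRoot ζ (2 * M + 1))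

include hζ

lemma W_sum :
    ∑ r ∈ range (2 * M + 1),
        (if r ≤ M then
          ζ ^ r * (∏ i ∈ range r, (1 - ζ ^ (2 * i + 1))) / ∏ i ∈ range r, (1 - ζ ^ (i + 1))
        else 0)
      = (-1) ^ M * ζ ^ (M * (M + 1)) := by
  rw [show 2 * M + 1 = (M + 1) + M by omega, sum_range_add]
  have h2 : ∑ i ∈ range M,
      (if (M + 1 + i) ≤ M then
        ζ ^ (M + 1 + i) * (∏ j ∈ range (M + 1 + i), (1 - ζ ^ (2 * j + 1)))
          / ∏ j ∈ range (M + 1 + i), (1 - ζ ^ (j + 1))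
      else 0) = 0 :=
    sum_eq_zero fun i _ => if_neg (by omega)
  have h1 : ∑ r ∈ range (M + 1),
      (if r ≤ M then
        ζ ^ r * (∏ i ∈ range r, (1 - ζ ^ (2 * i + 1))) / ∏ i ∈ range r, (1 - ζ ^ (i + 1))
      else 0)
      = ∑ r ∈ range (M + 1),
        ζ ^ r * (∏ i ∈ range r, (1 - ζ ^ (2 * i + 1))) / ∏ i ∈ range r, (1 - ζ ^ (i + 1)) :=
    sum_congr rfl fun r hr => if_pos (by have := mem_range.mp hr; omega)
  rw [h2, h1, add_zero, crux hζ]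

lemma big_sum (m : ℕ) :
    ∑ k ∈ range (m * (2 * M + 1)), aeval ζ (Nk M k) / aeval ζ (Dk M k)
      = (∑ a ∈ range m, (oddF a : K) / (a.factorial : K))
          * ((-1) ^ M * ζ ^ (M * (M + 1))) := by
  induction m with
  | zero => simp
  | succ p ih =>
      rw [show (p + 1) * (2 * M + 1) = p * (2 * M + 1) + (2 * M + 1) by ring,
        sum_range_add, ih]
      have h1 : ∀ x ∈ range (2 * M + 1),
          aeval ζ (Nk M (p * (2 * M + 1) + x)) / aeval ζ (Dk M (p * (2 * M + 1) + x))
            = (oddF p : K) / (p.factorial : K)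
              * (if x ≤ M then
                  ζ ^ x * (∏ i ∈ range x, (1 - ζ ^ (2 * i + 1)))
                    / ∏ i ∈ range x, (1 - ζ ^ (i + 1))
                else 0) := fun x hx => by
        rw [show p * (2 * M + 1) + x = (2 * M + 1) * p + x by ring]
        exact v_val hζ p x (mem_range.mp hx)
      rw [sum_congr rfl h1, ← mul_sum, W_sum hζ, sum_range_succ]
      ring

omit hζ in
lemma cast_sum (m : ℕ) :
    (∑ a ∈ range m, (oddF a : K) / (a.factorial : K))
      = algebraMap ℚ K (∑ k ∈ range m, ((2 * k).choose k : ℚ) / 2 ^ k) := by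
  rw [map_sum]
  refine sum_congr rfl fun a _ => ?_
  have h1 := oddF_fact a
  have h2 := Nat.choose_mul_factorial_mul_factorial (show a ≤ 2 * a by omega)
  rw [show 2 * a - a = a by omega] at h2
  have h3 : oddF a * 2 ^ a * a.factorial = (2 * a).choose a * a.factorial * a.factorial := by
    rw [h1, ← h2]
  have h4 : oddF a * 2 ^ a = (2 * a).choose a * a.factorial :=
    Nat.eq_of_mul_eq_mul_right (Nat.factorial_pos a) h3
  have hQ : (oddF a : ℚ) / (a.factorial : ℚ) = ((2 * a).choose a : ℚ) / 2 ^ a := by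
    rw [div_eq_div_iff (by exact_mod_cast Nat.factorial_ne_zero a) (by positivity)]
    exact_mod_cast congrArg (Nat.cast : ℕ → ℚ) h4
  calc (oddF a : K) / (a.factorial : K)
      = algebraMap ℚ K ((oddF a : ℚ) / (a.factorial : ℚ)) := by
        rw [map_div₀, map_natCast, map_natCast]
    _ = algebraMap ℚ K (((2 * a).choose a : ℚ) / 2 ^ a) := by rw [hQ]

end Eval3

/-- for positive `m` and odd positive `n`, modulo `Φ_n(q)`:
`∑_{k=0}^{mn-1} q^k/(-q;q)_k · C(2k,k)_q
 ≡ (-1)^{(n-1)/2} q^{(n²-1)/4} ∑_{k=0}^{m-1} (1/2^k)·C(2k,k)`. -/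
theorem stmt17 (m n : ℕ) (hm : 0 < m) (hn : 0 < n) (hodd : Odd n) :
    (Polynomial.cyclotomic n ℚ) ∣
      ((∑ k ∈ Finset.range (m * n),
          RatFunc.X ^ k / poch (-RatFunc.X) RatFunc.X k * qbinom (2 * k) k)
        - (-1) ^ ((n - 1) / 2) * RatFunc.X ^ ((n ^ 2 - 1) / 4)
            * RatFunc.C (∑ k ∈ Finset.range m,
                ((2 * k).choose k : ℚ) / 2 ^ k)).num := by
  obtain ⟨M, hM⟩ := hodd
  have hM' : n = 2 * M + 1 := by omega
  subst hM'
  rw [show (2 * M + 1 - 1) / 2 = M by omega]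
  rw [show ((2 * M + 1) ^ 2 - 1) / 4 = M * (M + 1) from by
    have h : (2 * M + 1) ^ 2 = 4 * (M * (M + 1)) + 1 := by ring
    omega]
  set n1 : ℕ+ := ⟨2 * M + 1, by omega⟩ with hn1
  set K := CyclotomicField n1 ℚ with hKdef
  haveI : CharZero K := charZero_of_injective_algebraMap (algebraMap ℚ K).injective
  haveI : IsCyclotomicExtension {(n1 : ℕ)} ℚ K := CyclotomicField.isCyclotomicExtension (n1 : ℕ) ℚ
  set ζ : K := IsCyclotomicExtension.zeta n1 ℚ K with hζdef
  have hζ : IsPrimitiveRoot ζ (2 * M + 1) := IsCyclotomicExtension.zeta_spec n1 ℚ K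
  have hpos : 0 < 2 * M + 1 := by omega
  set cst : ℚ := ∑ k ∈ Finset.range m, ((2 * k).choose k : ℚ) / 2 ^ k with hcst
  set Rpoly : ℚ[X] := (-1) ^ M * X ^ (M * (M + 1)) * C cst with hR
  have hRA : ((-1 : RatFunc ℚ)) ^ M * RatFunc.X ^ (M * (M + 1)) * RatFunc.C cst
      = algebraMap ℚ[X] (RatFunc ℚ) Rpoly := by
    rw [hR, map_mul, map_mul, map_pow, map_pow, RatFunc.algebraMap_X, RatFunc.algebraMap_C,
      map_neg, map_one]
  rw [hRA]
  set S := Finset.range (m * (2 * M + 1)) with hS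
  set Dtot : ℚ[X] := ∏ k ∈ S, Dk M k with hDtot
  set P : ℚ[X] := (∑ k ∈ S, Nk M k * ∏ l ∈ S.erase k, Dk M l) - Rpoly * Dtot with hP
  set f : RatFunc ℚ :=
    (∑ k ∈ S, RatFunc.X ^ k / poch (-RatFunc.X) RatFunc.X k * qbinom (2 * k) k)
      - algebraMap ℚ[X] (RatFunc ℚ) Rpoly with hf
  have hfD : f * algebraMap ℚ[X] (RatFunc ℚ) Dtot = algebraMap ℚ[X] (RatFunc ℚ) P := by
    rw [hf, hP, sub_mul, map_sub, sum_mul, map_sum, ← map_mul]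
    congr 1
    refine sum_congr rfl fun k hk => ?_
    have hsplit : Dtot = Dk M k * ∏ l ∈ S.erase k, Dk M l :=
      (Finset.mul_prod_erase S (Dk M) hk).symm
    rw [hsplit, map_mul, ← mul_assoc, summand_ND M k, ← map_mul]
  have hDne : aeval ζ Dtot ≠ 0 := by
    rw [hDtot, map_prod]
    exact Finset.prod_ne_zero_iff.mpr fun k _ => ev_Dk_ne hζ k
  have hPz : aeval ζ P = 0 := by
    rw [hP, map_sub, map_sum, map_mul]
    have hterm : ∀ k ∈ S, aeval ζ (Nk M k * ∏ l ∈ S.erase k, Dk M l)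
        = (aeval ζ (Nk M k) / aeval ζ (Dk M k)) * ∏ l ∈ S, aeval ζ (Dk M l) := by
      intro k hk
      have hcancel : (aeval ζ (Nk M k) / aeval ζ (Dk M k))
          * (aeval ζ (Dk M k) * ∏ l ∈ S.erase k, aeval ζ (Dk M l))
          = aeval ζ (Nk M k) * ∏ l ∈ S.erase k, aeval ζ (Dk M l) := by
        have := ev_Dk_ne hζ k
        rw [← mul_assoc, div_mul_cancel₀ _ this]
      rw [map_mul, map_prod, ← Finset.mul_prod_erase S (fun l => aeval ζ (Dk M l)) hk, hcancel]
    have hRval : aeval ζ Rpoly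
        = ((-1) ^ M * ζ ^ (M * (M + 1))) * algebraMap ℚ K cst := by
      rw [hR, map_mul, map_mul, map_pow, map_pow, aeval_X, aeval_C, map_neg, map_one]
    have hprodD : aeval ζ Dtot = ∏ l ∈ S, aeval ζ (Dk M l) := by rw [hDtot, map_prod]
    rw [sum_congr rfl hterm, ← sum_mul, hS, big_sum hζ m, hRval, ← hprodD, hDtot,
      hcst, ← cast_sum (K := K) m]
    rw [← hDtot]
    ring
  have hcyc : cyclotomic (2 * M + 1) ℚ = minpoly ℚ ζ := cyclotomic_eq_minpoly_rat hζ hpos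
  have hdvdP : cyclotomic (2 * M + 1) ℚ ∣ P := by
    rw [hcyc]; exact minpoly.dvd ℚ ζ hPz
  have hdenne : algebraMap ℚ[X] (RatFunc ℚ) f.denom ≠ 0 := by
    simpa using RatFunc.denom_ne_zero f
  have hnumd : algebraMap ℚ[X] (RatFunc ℚ) f.num = f * algebraMap ℚ[X] (RatFunc ℚ) f.denom :=
    (div_eq_iff hdenne).mp (RatFunc.num_div_denom f)
  have hnum : f.num * Dtot = f.denom * P := by
    apply IsFractionRing.injective ℚ[X] (RatFunc ℚ)
    rw [map_mul, map_mul, hnumd, mul_right_comm, hfD]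
    ring
  have hprime : Prime (cyclotomic (2 * M + 1) ℚ) :=
    UniqueFactorizationMonoid.irreducible_iff_prime.mp (cyclotomic.irreducible_rat hpos)
  have hdvdnum : cyclotomic (2 * M + 1) ℚ ∣ f.num * Dtot := by
    rw [hnum]
    exact Dvd.dvd.mul_left hdvdP f.denom
  rcases hprime.dvd_mul.mp hdvdnum with h | h
  · exact h
  · exfalso
    obtain ⟨t, ht⟩ := h
    have hc0 : aeval ζ (cyclotomic (2 * M + 1) ℚ) = 0 := by
      rw [hcyc]; exact minpoly.aeval ℚ ζ
    exact hDne (by rw [ht, map_mul, hc0, zero_mul])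
end

section
/- Let n be a positive odd integer and k a nonnegative integer with k ≤ (n-1)/2. Then (1/2)_k^3 / k!^3 ≡ (q^n;q^{2n})_k^2 (q^{2n};q^{4n})_k / ((q^{2n};q^{2n})_k^2 (q^{4n};q^{4n})_k) · q^{2nk} modulo Φ_n(q)^2, as a congruence of rational functions in q (the left side being a rational constant with denominator a power of 2). -/
open Finset Polynomial

/-- The rational rising factorial `(a)_k`. -/
def ascRat (a : ℚ) (k : ℕ) : ℚ := ∏ i ∈ Finset.range k, (a + i)

noncomputable def sY (m : ℕ) : ℚ[X] := ∑ i ∈ Finset.range m, X ^ i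
noncomputable def AY (k : ℕ) : ℚ[X] := ∏ i ∈ Finset.range k, sY (2*i+1)^2 * sY (4*i+2)
noncomputable def BY (k : ℕ) : ℚ[X] := ∏ i ∈ Finset.range k, sY (2*i+2)^2 * sY (4*i+4)
def nmq (k : ℕ) : ℚ := ∏ i ∈ Finset.range k, (2*i+1:ℚ)^3
def dnq (k : ℕ) : ℚ := ∏ i ∈ Finset.range k, (2*i+2:ℚ)^3
noncomputable def FY (k : ℕ) : ℚ[X] := C (nmq k) * BY k - C (dnq k) * X^(2*k) * AY k

lemma sY_eval (m : ℕ) : (sY m).eval 1 = m := by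
  simp [sY]

lemma sum_range_id_cast (m : ℕ) : (∑ i ∈ Finset.range m, (i:ℚ)) = m*(m-1)/2 := by
  induction m with
  | zero => simp
  | succ m ih => rw [Finset.sum_range_succ, ih]; push_cast; ring

lemma sY_deriv_eval (m : ℕ) : (derivative (sY m)).eval 1 = (m:ℚ)*((m:ℚ)-1)/2 := by
  simp only [sY, map_sum, derivative_X_pow, eval_finset_sum, eval_mul, eval_pow, eval_X,
    eval_natCast, one_pow, mul_one, eval_C]
  rw [sum_range_id_cast]

lemma sub_one_sq_dvd {F : ℚ[X]} (h1 : F.eval 1 = 0) (h2 : (derivative F).eval 1 = 0) :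
    (X - 1)^2 ∣ F := by
  obtain ⟨G, hG⟩ := (dvd_iff_isRoot (p := F) (a := 1)).2 h1
  have hG' : (X - C (1:ℚ)) ∣ G := by
    apply (dvd_iff_isRoot).2
    have := h2
    rw [hG] at this
    simp only [derivative_mul, derivative_sub, derivative_X, derivative_C, sub_zero, one_mul,
      eval_add, eval_mul, eval_sub, eval_X, eval_C, sub_self, zero_mul, zero_add] at this
    simpa [IsRoot] using this
  obtain ⟨H, hH⟩ := hG'
  refine ⟨H, ?_⟩
  rw [hG, hH]
  simp only [map_one]
  ring

lemma step (k : ℕ) : (X - 1)^2 ∣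
    (C (((2*k+1:ℕ):ℚ)^3) * (sY (2*k+2)^2 * sY (4*k+4))
      - C (((2*k+2:ℕ):ℚ)^3) * (X^2 * (sY (2*k+1)^2 * sY (4*k+2)))) := by
  apply sub_one_sq_dvd
  · simp only [eval_sub, eval_mul, eval_pow, eval_C, eval_X, sY_eval]
    push_cast; ring
  · simp only [derivative_sub, derivative_mul, derivative_pow, derivative_C, derivative_X,
      zero_mul, mul_one, eval_sub, eval_add, eval_mul, eval_pow, eval_C, eval_X, eval_natCast,
      sY_eval, sY_deriv_eval, one_pow, zero_add]
    push_cast; ring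

lemma FY_dvd (k : ℕ) : (X - 1)^2 ∣ FY k := by
  induction k with
  | zero => simp [FY, nmq, dnq, AY, BY]
  | succ k ih =>
    have key : FY (k+1) = C (((2*k+1:ℕ):ℚ)^3) * (sY (2*k+2)^2 * sY (4*k+4)) * FY k
        + C (dnq k) * X^(2*k) * AY k *
          (C (((2*k+1:ℕ):ℚ)^3) * (sY (2*k+2)^2 * sY (4*k+4))
            - C (((2*k+2:ℕ):ℚ)^3) * (X^2 * (sY (2*k+1)^2 * sY (4*k+2)))) := by
      simp only [FY, AY, BY, nmq, dnq, Finset.prod_range_succ]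
      push_cast
      simp only [map_mul, map_pow, map_add, map_ofNat, map_one]
      ring
    rw [key]
    exact dvd_add (Dvd.dvd.mul_left ih _) (Dvd.dvd.mul_left (step k) _)

noncomputable def sN (n m : ℕ) : ℚ[X] := ∑ i ∈ Finset.range m, X^(n*i)
noncomputable def AN (n k : ℕ) : ℚ[X] := ∏ i ∈ Finset.range k, sN n (2*i+1)^2 * sN n (4*i+2)
noncomputable def BN (n k : ℕ) : ℚ[X] := ∏ i ∈ Finset.range k, sN n (2*i+2)^2 * sN n (4*i+4)
noncomputable def FN (n k : ℕ) : ℚ[X] :=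
  C (nmq k) * BN n k - C (dnq k) * X^(2*n*k) * AN n k

lemma sN_from_sY (n m : ℕ) : Polynomial.aeval ((X:ℚ[X])^n) (sY m) = sN n m := by
  simp [sY, sN, pow_mul]

lemma FN_from_FY (n k : ℕ) : Polynomial.aeval ((X:ℚ[X])^n) (FY k) = FN n k := by
  simp only [FY, FN, AY, AN, BY, BN, map_sub, map_mul, map_prod, map_pow, aeval_X, aeval_C,
    sN_from_sY, ← pow_mul]
  rw [show n * (2*k) = 2*n*k by ring, ← Polynomial.C_eq_algebraMap, ← Polynomial.C_eq_algebraMap]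

lemma FN_dvd (n k : ℕ) (hn : 0 < n) : (cyclotomic n ℚ)^2 ∣ FN n k := by
  have h1 : (cyclotomic n ℚ)^2 ∣ ((X:ℚ[X])^n - 1)^2 :=
    pow_dvd_pow_of_dvd (cyclotomic.dvd_X_pow_sub_one n ℚ) 2
  have h2 := map_dvd (Polynomial.aeval ((X:ℚ[X])^n)) (FY_dvd k)
  rw [FN_from_FY] at h2
  simp only [map_pow, map_sub, aeval_X, map_one] at h2
  exact dvd_trans h1 h2

lemma one_sub_pow (n m : ℕ) : (1:ℚ[X]) - X^(n*m) = -(((X:ℚ[X])^n - 1) * sN n m) := by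
  have h := geom_sum_mul ((X:ℚ[X])^n) m
  have hs : sN n m = ∑ i ∈ Finset.range m, ((X:ℚ[X])^n)^i := by simp [sN, pow_mul]
  rw [hs, pow_mul]
  linear_combination h


lemma poch_eq (n k a b : ℕ) (m : ℕ → ℕ) (h : ∀ i, a + b * i = n * m i) :
    poch (RatFunc.X ^ a) (RatFunc.X ^ b) k
      = algebraMap ℚ[X] (RatFunc ℚ)
          ((-(((X:ℚ[X])^n - 1)))^k * ∏ i ∈ Finset.range k, sN n (m i)) := by
  have key : ∀ i, (1:RatFunc ℚ) - RatFunc.X^a * (RatFunc.X^b)^i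
      = algebraMap ℚ[X] (RatFunc ℚ) (-(((X:ℚ[X])^n-1)) * sN n (m i)) := by
    intro i
    have h1 : (1:RatFunc ℚ) - RatFunc.X^a * (RatFunc.X^b)^i
        = algebraMap ℚ[X] (RatFunc ℚ) ((1:ℚ[X]) - X^(a+b*i)) := by
      simp [map_sub, map_pow, RatFunc.algebraMap_X, pow_add, pow_mul]
    rw [h1, h i, one_sub_pow]
    ring_nf
  unfold poch
  rw [Finset.prod_congr rfl (fun i _ => key i), ← map_prod,
    Finset.prod_mul_distrib, Finset.prod_const, Finset.card_range]

lemma nmq_eq (k : ℕ) : nmq k = (2:ℚ)^(3*k) * ascRat (1/2) k ^ 3 := by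
  induction k with
  | zero => simp [nmq, ascRat]
  | succ k ih =>
    have ha : ascRat (1/2) (k+1) = ascRat (1/2) k * (1/2 + k) := Finset.prod_range_succ _ _
    rw [nmq, Finset.prod_range_succ, ← nmq, ih, ha]
    push_cast
    ring

lemma dnq_eq (k : ℕ) : dnq k = (2:ℚ)^(3*k) * (k.factorial : ℚ)^3 := by
  induction k with
  | zero => simp [dnq]
  | succ k ih =>
    rw [dnq, Finset.prod_range_succ, ← dnq, ih, Nat.factorial_succ]
    push_cast
    ring

lemma dnq_ne (k : ℕ) : dnq k ≠ 0 := by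
  rw [dnq_eq]
  positivity

lemma c_eq (k : ℕ) : ascRat (1/2) k ^ 3 / (k.factorial:ℚ)^3 = nmq k / dnq k := by
  rw [nmq_eq, dnq_eq]
  have h2 : ((2:ℚ))^(3*k) ≠ 0 := by positivity
  have hf : ((k.factorial : ℚ))^3 ≠ 0 := by positivity
  field_simp

lemma sN_eval (n m : ℕ) : (sN n m).eval 1 = m := by simp [sN, eval_finset_sum]

lemma sN_ne (n m : ℕ) (hm : 0 < m) : sN n m ≠ 0 := by
  intro h
  have := sN_eval n m
  rw [h] at this
  have h0 : ((m:ℚ)) = 0 := by simpa using this.symm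
  exact hm.ne' (by exact_mod_cast h0)

lemma BN_ne (n k : ℕ) : BN n k ≠ 0 := by
  rw [BN]
  apply Finset.prod_ne_zero_iff.2
  intro i _
  exact mul_ne_zero (pow_ne_zero _ (sN_ne n _ (by omega))) (sN_ne n _ (by omega))

lemma not_dvd_sN (n m : ℕ) (hn : 0 < n) (hm : 0 < m) : ¬ (cyclotomic n ℚ ∣ sN n m) := by
  intro hdvd
  have hsub : cyclotomic n ℚ ∣ sN n m - C (m:ℚ) := by
    have : sN n m - C (m:ℚ) = ∑ i ∈ Finset.range m, (X^(n*i) - 1) := by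
      rw [Finset.sum_sub_distrib, sN]
      simp [Polynomial.C_eq_natCast]
    rw [this]
    apply Finset.dvd_sum
    intro i _
    calc cyclotomic n ℚ ∣ (X:ℚ[X])^n - 1 := cyclotomic.dvd_X_pow_sub_one n ℚ
      _ ∣ X^(n*i) - 1 := by
          have := sub_dvd_pow_sub_pow ((X:ℚ[X])^n) 1 i
          simpa [← pow_mul] using this
  have hC : cyclotomic n ℚ ∣ C (m:ℚ) := (dvd_sub_right hdvd).mp hsub
  have hu : IsUnit (C (m:ℚ)) := isUnit_C.2 (isUnit_iff_ne_zero.2 (by exact_mod_cast hm.ne'))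
  exact (cyclotomic.irreducible_rat hn).not_isUnit (isUnit_of_dvd_unit hC hu)


/-- for odd positive `n` and `0 ≤ k ≤ (n-1)/2`,
`(1/2)³_k/k!³ ≡ (qⁿ;q²ⁿ)²_k(q²ⁿ;q⁴ⁿ)_k/((q²ⁿ;q²ⁿ)²_k(q⁴ⁿ;q⁴ⁿ)_k)·q^{2nk}
 (mod Φ_n(q)²)`. -/
theorem stmt19 (n k : ℕ) (hn : 0 < n) (hodd : Odd n) (hk : k ≤ (n - 1) / 2) :
    (Polynomial.cyclotomic n ℚ) ^ 2 ∣
      (RatFunc.C ((ascRat (1/2) k) ^ 3 / (k.factorial : ℚ) ^ 3)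
        - (poch (RatFunc.X ^ n) (RatFunc.X ^ (2 * n)) k) ^ 2
            * poch (RatFunc.X ^ (2 * n)) (RatFunc.X ^ (4 * n)) k
            / ((poch (RatFunc.X ^ (2 * n)) (RatFunc.X ^ (2 * n)) k) ^ 2
              * poch (RatFunc.X ^ (4 * n)) (RatFunc.X ^ (4 * n)) k)
            * RatFunc.X ^ (2 * n * k)).num := by
  set φ := algebraMap ℚ[X] (RatFunc ℚ) with hφ
  set e : ℚ[X] := -(((X:ℚ[X])^n - 1)) with he
  -- the four pochhammers
  have hp1 := poch_eq n k n (2*n) (fun i => 2*i+1) (fun i => by ring)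
  have hp2 := poch_eq n k (2*n) (4*n) (fun i => 4*i+2) (fun i => by ring)
  have hp3 := poch_eq n k (2*n) (2*n) (fun i => 2*i+2) (fun i => by ring)
  have hp4 := poch_eq n k (4*n) (4*n) (fun i => 4*i+4) (fun i => by ring)
  have hXn : ((X:ℚ[X])^n - 1) ≠ 0 := by
    intro h
    have := congrArg (Polynomial.eval 0) h
    simp [zero_pow hn.ne'] at this
  have hek : (e:ℚ[X])^(3*k) ≠ 0 := pow_ne_zero _ (by rw [he]; exact neg_ne_zero.2 hXn)
  have hPi : (poch (RatFunc.X ^ n) (RatFunc.X ^ (2 * n)) k) ^ 2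
      * poch (RatFunc.X ^ (2 * n)) (RatFunc.X ^ (4 * n)) k = φ (e^(3*k) * AN n k) := by
    rw [hp1, hp2, ← map_pow, ← map_mul]
    congr 1
    rw [he, AN, Finset.prod_mul_distrib, Finset.prod_pow]
    ring
  have hDe : (poch (RatFunc.X ^ (2*n)) (RatFunc.X ^ (2 * n)) k) ^ 2
      * poch (RatFunc.X ^ (4 * n)) (RatFunc.X ^ (4 * n)) k = φ (e^(3*k) * BN n k) := by
    rw [hp3, hp4, ← map_pow, ← map_mul]
    congr 1
    rw [he, BN, Finset.prod_mul_distrib, Finset.prod_pow]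
    ring
  have hBNne : φ (BN n k) ≠ 0 := RatFunc.algebraMap_ne_zero (BN_ne n k)
  have hdnne : φ (C (dnq k)) ≠ 0 := RatFunc.algebraMap_ne_zero (by simp [dnq_ne k])
  have hE : RatFunc.C ((ascRat (1/2) k) ^ 3 / (k.factorial : ℚ) ^ 3)
        - (poch (RatFunc.X ^ n) (RatFunc.X ^ (2 * n)) k) ^ 2
            * poch (RatFunc.X ^ (2 * n)) (RatFunc.X ^ (4 * n)) k
            / ((poch (RatFunc.X ^ (2 * n)) (RatFunc.X ^ (2 * n)) k) ^ 2
              * poch (RatFunc.X ^ (4 * n)) (RatFunc.X ^ (4 * n)) k)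
            * RatFunc.X ^ (2 * n * k)
      = φ (FN n k) / φ (C (dnq k) * BN n k) := by
    rw [hPi, hDe, c_eq]
    have h1 : RatFunc.C (nmq k / dnq k) = φ (C (nmq k)) / φ (C (dnq k)) := by
      rw [map_div₀, RatFunc.algebraMap_C, RatFunc.algebraMap_C]
    have h2 : (RatFunc.X : RatFunc ℚ)^(2*n*k) = φ (X^(2*n*k)) := by
      rw [map_pow, RatFunc.algebraMap_X]
    have h3 : φ (e^(3*k) * AN n k) / φ (e^(3*k) * BN n k) = φ (AN n k) / φ (BN n k) := by
      rw [map_mul, map_mul]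
      exact mul_div_mul_left _ _ (RatFunc.algebraMap_ne_zero hek)
    rw [h1, h2, h3, FN, map_sub, map_mul, map_mul, map_mul]
    field_simp
    simp only [map_mul]
    ring
  -- extract numerator divisibility
  set E := RatFunc.C ((ascRat (1/2) k) ^ 3 / (k.factorial : ℚ) ^ 3)
        - (poch (RatFunc.X ^ n) (RatFunc.X ^ (2 * n)) k) ^ 2
            * poch (RatFunc.X ^ (2 * n)) (RatFunc.X ^ (4 * n)) k
            / ((poch (RatFunc.X ^ (2 * n)) (RatFunc.X ^ (2 * n)) k) ^ 2
              * poch (RatFunc.X ^ (4 * n)) (RatFunc.X ^ (4 * n)) k)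
            * RatFunc.X ^ (2 * n * k) with hEdef
  have h0 : φ E.num / φ E.denom = φ (FN n k) / φ (C (dnq k) * BN n k) := by
    rw [RatFunc.num_div_denom]
    exact hE
  have hQne : φ (C (dnq k) * BN n k) ≠ 0 := by
    rw [map_mul]; exact mul_ne_zero hdnne hBNne
  have hdne : φ E.denom ≠ 0 := RatFunc.algebraMap_ne_zero (RatFunc.denom_ne_zero E)
  rw [div_eq_div_iff hdne hQne, ← map_mul, ← map_mul] at h0
  have h2 : E.num * (C (dnq k) * BN n k) = FN n k * E.denom :=
    RatFunc.algebraMap_injective ℚ h0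
  have hprime : Prime (cyclotomic n ℚ) := (cyclotomic.irreducible_rat hn).prime
  have h3 : (cyclotomic n ℚ)^2 ∣ E.num * (C (dnq k) * BN n k) := by
    rw [h2]
    exact (FN_dvd n k hn).mul_right _
  refine hprime.pow_dvd_of_dvd_mul_right 2 ?_ h3
  intro hdvd
  rcases hprime.dvd_mul.mp hdvd with h | h
  · have hu : IsUnit (C (dnq k)) := isUnit_C.2 (isUnit_iff_ne_zero.2 (dnq_ne k))
    exact hprime.not_unit (isUnit_of_dvd_unit h hu)
  · rw [BN] at h
    obtain ⟨i, _, hi⟩ := (hprime.dvd_finset_prod_iff _).mp h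
    rcases hprime.dvd_mul.mp hi with h' | h'
    · exact not_dvd_sN n _ hn (by omega) (hprime.dvd_of_dvd_pow h')
    · exact not_dvd_sN n _ hn (by omega) h'
end
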